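/- arXiv:2302.03994 — 9 statements merged into one kernel-verified Lean document; each statement's English description precedes it below -/
import Mathlib

section
/- For all p in (0, 1), the binary entropy satisfies H(p) ≤ (log p · log(1−p)) / log 2 (natural logarithms). -/
/-- Binary entropy (natural logarithm). -/
noncomputable def binEnt (p : ℝ) : ℝ :=
  p * Real.log (1 / p) + (1 - p) * Real.log (1 / (1 - p))

/-- Padé-type bound for the logarithm on `(0,1)`. -/
lemma log_lt_pade {x : ℝ} (hx : 0 < x) (hx1 : x < 1) :
    Real.log x < 2 * (x - 1) / (x + 1) := by
  set F : ℝ → ℝ := fun y => 2 * (y - 1) / (y + 1) - Real.log y with hF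
  have hder : ∀ y ∈ Set.Ioo (0:ℝ) 1, HasDerivAt F (4 / (y + 1) ^ 2 - 1 / y) y := by
    intro y hy
    have hy0 : (0:ℝ) < y := hy.1
    have h1 : y + 1 ≠ 0 := by linarith
    have hd1 : HasDerivAt (fun y : ℝ => 2 * (y - 1) / (y + 1)) (4 / (y + 1) ^ 2) y := by
      have h := (((hasDerivAt_id y).sub_const 1).const_mul 2).fun_div
        ((hasDerivAt_id y).add_const 1) h1
      simp only [id_eq] at h
      refine h.congr_deriv ?_
      ring
    have hd2 : HasDerivAt Real.log (1 / y) y := by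
      simpa [one_div] using Real.hasDerivAt_log hy0.ne'
    exact hd1.sub hd2
  have hanti : StrictAntiOn F (Set.Ioc 0 1) := by
    apply strictAntiOn_of_deriv_neg (convex_Ioc 0 1)
    · intro y hy
      have hy0 : (0:ℝ) < y := hy.1
      by_cases h : y < 1
      · exact (hder y ⟨hy0, h⟩).continuousAt.continuousWithinAt
      · have hy1 : y = 1 := le_antisymm hy.2 (not_lt.mp h)
        subst hy1
        apply ContinuousWithinAt.sub
        · exact (ContinuousAt.div (by fun_prop) (by fun_prop) (by norm_num)).continuousWithinAt
        · exact (Real.continuousAt_log (by norm_num)).continuousWithinAt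
    · intro y hy
      rw [interior_Ioc] at hy
      have hy0 : (0:ℝ) < y := hy.1
      rw [(hder y hy).deriv]
      rw [div_sub_div _ _ (by positivity) hy0.ne', div_neg_iff]
      right
      constructor
      · nlinarith [sq_nonneg (y - 1), hy.2]
      · positivity
  have h01 : x ∈ Set.Ioc (0:ℝ) 1 := ⟨hx, hx1.le⟩
  have h11 : (1:ℝ) ∈ Set.Ioc (0:ℝ) 1 := by norm_num
  have := hanti h01 h11 hx1
  simp only [hF, Real.log_one] at this
  norm_num at this
  linarith

noncomputable def g (x : ℝ) : ℝ := (x - 1) / Real.log x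

noncomputable def g1 (x : ℝ) : ℝ :=
  (Real.log x - (x - 1) / x) / (Real.log x) ^ 2

lemma hasDerivAt_g {x : ℝ} (hx : 0 < x) (hx1 : x < 1) : HasDerivAt g (g1 x) x := by
  have hl : Real.log x ≠ 0 := (Real.log_neg hx hx1).ne
  have hd : HasDerivAt g ((1 * Real.log x - (x - 1) * (1 / x)) / (Real.log x) ^ 2) x := by
    refine HasDerivAt.div ((hasDerivAt_id x).sub_const 1) ?_ hl
    simpa [one_div] using Real.hasDerivAt_log hx.ne'
  convert hd using 1
  unfold g1
  ring

lemma hasDerivAt_g1 {x : ℝ} (hx : 0 < x) (hx1 : x < 1) :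
    HasDerivAt g1 ((2 * (x - 1) - (x + 1) * Real.log x) / (x ^ 2 * (Real.log x) ^ 3)) x := by
  have hl : Real.log x ≠ 0 := (Real.log_neg hx hx1).ne
  have hlog : HasDerivAt Real.log (1 / x) x := by
    simpa [one_div] using Real.hasDerivAt_log hx.ne'
  have hnum : HasDerivAt (fun y : ℝ => Real.log y - (y - 1) / y)
      (1 / x - (1 * x - (x - 1) * 1) / x ^ 2) x :=
    hlog.sub (((hasDerivAt_id x).sub_const 1).div (hasDerivAt_id x) hx.ne')
  have hden : HasDerivAt (fun y : ℝ => (Real.log y) ^ 2) (2 * Real.log x * (1 / x)) x := by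
    simpa using hlog.fun_pow 2
  have hd := hnum.fun_div hden (pow_ne_zero 2 hl)
  refine hd.congr_deriv ?_
  field_simp
  ring
lemma g2_neg {x : ℝ} (hx : 0 < x) (hx1 : x < 1) :
    (2 * (x - 1) - (x + 1) * Real.log x) / (x ^ 2 * (Real.log x) ^ 3) < 0 := by
  have hl : Real.log x < 0 := Real.log_neg hx hx1
  have hnum : 0 < 2 * (x - 1) - (x + 1) * Real.log x := by
    have := log_lt_pade hx hx1
    rw [lt_div_iff₀ (by linarith : (0:ℝ) < x + 1)] at this
    linarith
  apply div_neg_of_pos_of_neg hnum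
  have h3 : (Real.log x) ^ 3 < 0 := Odd.pow_neg (by decide) hl
  exact mul_neg_of_pos_of_neg (pow_pos hx 2) h3

lemma g_concave : StrictConcaveOn ℝ (Set.Ioo (0:ℝ) 1) g := by
  apply strictConcaveOn_of_deriv2_neg (convex_Ioo 0 1)
  · intro y hy
    exact (hasDerivAt_g hy.1 hy.2).continuousAt.continuousWithinAt
  · intro x hx
    rw [interior_Ioo] at hx
    have heq : deriv g =ᶠ[nhds x] g1 := by
      filter_upwards [IsOpen.mem_nhds isOpen_Ioo hx] with y hy
      exact (hasDerivAt_g hy.1 hy.2).deriv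
    show deriv (deriv g) x < 0
    rw [heq.deriv_eq, (hasDerivAt_g1 hx.1 hx.2).deriv]
    exact g2_neg hx.1 hx.2

/-- Topsøe's bound: for all `p ∈ (0,1)`, `H(p) ≤ log(p)·log(1−p)/log 2`. -/
theorem stmt1 (p : ℝ) (hp0 : 0 < p) (hp1 : p < 1) :
    binEnt p ≤ Real.log p * Real.log (1 - p) / Real.log 2 := by
  have hq0 : (0:ℝ) < 1 - p := by linarith
  have hq1 : 1 - p < 1 := by linarith
  have hp : p ∈ Set.Ioo (0:ℝ) 1 := ⟨hp0, hp1⟩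
  have hq : 1 - p ∈ Set.Ioo (0:ℝ) 1 := ⟨hq0, hq1⟩
  have hcc := g_concave.concaveOn.2 hp hq (by norm_num : (0:ℝ) ≤ 1/2)
    (by norm_num : (0:ℝ) ≤ 1/2) (by norm_num)
  have hmid : (1/2 : ℝ) • p + (1/2 : ℝ) • (1 - p) = 1/2 := by
    simp only [smul_eq_mul]; ring
  rw [hmid] at hcc
  have hl2 : 0 < Real.log 2 := Real.log_pos (by norm_num)
  have hghalf : g (1/2) = 1 / (2 * Real.log 2) := by
    unfold g
    rw [one_div, Real.log_inv]
    rw [div_eq_div_iff (neg_ne_zero.mpr hl2.ne') (by positivity)]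
    ring
  rw [hghalf] at hcc
  -- notation
  set a : ℝ := Real.log p with ha
  set b : ℝ := Real.log (1 - p) with hb
  have haneg : a < 0 := Real.log_neg hp0 hp1
  have hbneg : b < 0 := Real.log_neg hq0 hq1
  have hab : 0 < a * b := mul_pos_of_neg_of_neg haneg hbneg
  have hsum : (p - 1) / a + (-p) / b ≤ 1 / Real.log 2 := by
    have hgp : g p = (p - 1) / a := rfl
    have hgq : g (1 - p) = (-p) / b := by
      unfold g; rw [← hb]; ring_nf
    simp only [smul_eq_mul] at hcc
    rw [hgp, hgq] at hcc
    have hhalf : 1 / (2 * Real.log 2) = (1/2) * (1 / Real.log 2) := by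
      rw [one_div (2 * Real.log 2), mul_inv]; ring
    rw [hhalf] at hcc
    linarith
  have h2 : (p - 1) * b + (-p) * a ≤ a * b * (1 / Real.log 2) := by
    have ha0 : a ≠ 0 := haneg.ne
    have hb0 : b ≠ 0 := hbneg.ne
    have e1 : (p - 1) / a * (a * b) = (p - 1) * b := by
      rw [← mul_assoc, div_mul_cancel₀ _ ha0]
    have e2 : (-p) / b * (a * b) = (-p) * a := by
      rw [mul_comm a b, ← mul_assoc, div_mul_cancel₀ _ hb0]
    calc (p - 1) * b + (-p) * a = ((p - 1) / a + (-p) / b) * (a * b) := by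
          rw [add_mul, e1, e2]
      _ ≤ (1 / Real.log 2) * (a * b) := mul_le_mul_of_nonneg_right hsum hab.le
      _ = a * b * (1 / Real.log 2) := by ring
  have hbe : binEnt p = (p - 1) * b + (-p) * a := by
    unfold binEnt
    rw [one_div p, one_div (1 - p), Real.log_inv, Real.log_inv, ← ha, ← hb]
    ring
  rw [hbe, div_eq_mul_one_div]
  exact h2
end

section
/- Let S be a finite multiset of labeled examples with labels in {1,…,k} and let S' = S + s be obtained by inserting one labeled example s. Then |Gini(S) − Gini(S')| ≤ 4 / max(|S|, |S'|), where Gini(S) = 1 − Σᵢ pᵢ(S)² and pᵢ(S) is the fraction of elements of S with label i. -/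
/-- `pFrac i S` is the fraction of elements of the multiset `S` with label `i`. -/
noncomputable def pFrac {k : ℕ} (i : Fin k) (S : Multiset (Fin k)) : ℝ :=
  (S.count i : ℝ) / S.card

/-- Gini impurity of a multiset of labels in `{1,…,k}`. -/
noncomputable def gini {k : ℕ} (S : Multiset (Fin k)) : ℝ :=
  1 - ∑ i : Fin k, (pFrac i S) ^ 2

lemma pFrac_nonneg {k : ℕ} (i : Fin k) (S : Multiset (Fin k)) : 0 ≤ pFrac i S := by
  unfold pFrac; positivity

lemma pFrac_le_one {k : ℕ} (i : Fin k) (S : Multiset (Fin k)) : pFrac i S ≤ 1 := by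
  unfold pFrac
  apply div_le_one_of_le₀
  · exact_mod_cast Multiset.count_le_card i S
  · positivity

lemma sum_count_eq {k : ℕ} (S : Multiset (Fin k)) :
    ∑ i : Fin k, S.count i = S.card := by
  rw [← Multiset.toFinset_sum_count_eq]
  exact (Finset.sum_subset (Finset.subset_univ _)
    (fun x _ hx => Multiset.count_eq_zero.mpr (by simpa using hx))).symm

/-- Inserting a single labeled example changes the Gini impurity by at most
`4 / max(|S|, |S'|)`. -/
theorem stmt2 {k : ℕ} (S : Multiset (Fin k)) (hS : S ≠ 0) (s : Fin k) :
    |gini S - gini (s ::ₘ S)| ≤ 4 / ((max S.card (s ::ₘ S).card : ℕ) : ℝ) := by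
  have hpos : 0 < S.card := Multiset.card_pos.mpr hS
  have hcard : (s ::ₘ S).card = S.card + 1 := Multiset.card_cons s S
  have hmax : max S.card (s ::ₘ S).card = S.card + 1 := by
    rw [hcard]; exact max_eq_right (Nat.le_succ _)
  rw [hmax]
  set N : ℝ := (S.card : ℝ) with hN
  have hN0 : 0 < N := by rw [hN]; exact_mod_cast hpos
  have hN1 : 0 < N + 1 := by linarith
  have hcast : ((S.card + 1 : ℕ) : ℝ) = N + 1 := by push_cast; rfl
  rw [hcast]
  set c : Fin k → ℝ := fun i => (S.count i : ℝ) with hc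
  set d : Fin k → ℝ := fun i => if i = s then 1 else 0 with hd
  have hc0 : ∀ i, 0 ≤ c i := fun i => by positivity
  have hd0 : ∀ i, 0 ≤ d i := fun i => by simp only [hd]; split <;> norm_num
  have hsumc : ∑ i : Fin k, c i = N := by
    simp only [hc, hN]
    exact_mod_cast congrArg (Nat.cast : ℕ → ℝ) (sum_count_eq S)
  have hsumd : ∑ i : Fin k, d i = 1 := by
    simp [hd]
  have hdiff : ∀ i : Fin k, pFrac i (s ::ₘ S) - pFrac i S = (N * d i - c i) / (N * (N + 1)) := by
    intro i
    simp only [pFrac, hcard, Multiset.count_cons, hd, hc]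
    by_cases h : i = s <;> simp [h] <;> field_simp <;> ring
  have hgini : gini S - gini (s ::ₘ S) =
      ∑ i : Fin k, ((pFrac i (s ::ₘ S)) ^ 2 - (pFrac i S) ^ 2) := by
    simp only [gini, Finset.sum_sub_distrib]; ring
  have habs : ∀ i : Fin k, |pFrac i (s ::ₘ S) - pFrac i S| ≤ (N * d i + c i) / (N * (N + 1)) := by
    intro i
    rw [hdiff i, abs_div, abs_of_pos (mul_pos hN0 hN1)]
    gcongr
    have h1 : 0 ≤ N * d i := by positivity
    exact abs_sub_le_iff.mpr ⟨by linarith [hc0 i], by linarith [hc0 i]⟩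
  calc |gini S - gini (s ::ₘ S)|
      = |∑ i : Fin k, ((pFrac i (s ::ₘ S)) ^ 2 - (pFrac i S) ^ 2)| := by rw [hgini]
    _ ≤ ∑ i : Fin k, |(pFrac i (s ::ₘ S)) ^ 2 - (pFrac i S) ^ 2| :=
        Finset.abs_sum_le_sum_abs _ _
    _ ≤ ∑ i : Fin k, 2 * |pFrac i (s ::ₘ S) - pFrac i S| := by
        apply Finset.sum_le_sum
        intro i _
        have : (pFrac i (s ::ₘ S)) ^ 2 - (pFrac i S) ^ 2
            = (pFrac i (s ::ₘ S) - pFrac i S) * (pFrac i (s ::ₘ S) + pFrac i S) := by ring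
        rw [this, abs_mul]
        have h2 : |pFrac i (s ::ₘ S) + pFrac i S| ≤ 2 := by
          rw [abs_of_nonneg (by linarith [pFrac_nonneg i S, pFrac_nonneg i (s ::ₘ S)])]
          linarith [pFrac_le_one i S, pFrac_le_one i (s ::ₘ S)]
        calc |pFrac i (s ::ₘ S) - pFrac i S| * |pFrac i (s ::ₘ S) + pFrac i S|
            ≤ |pFrac i (s ::ₘ S) - pFrac i S| * 2 :=
              mul_le_mul_of_nonneg_left h2 (abs_nonneg _)
          _ = 2 * |pFrac i (s ::ₘ S) - pFrac i S| := by ring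
    _ ≤ ∑ i : Fin k, 2 * ((N * d i + c i) / (N * (N + 1))) := by
        apply Finset.sum_le_sum
        intro i _
        exact mul_le_mul_of_nonneg_left (habs i) (by norm_num)
    _ = 2 * ((N * 1 + N) / (N * (N + 1))) := by
        rw [← Finset.mul_sum, ← Finset.sum_div, Finset.sum_add_distrib,
          ← Finset.mul_sum, hsumd, hsumc]
    _ = 4 / (N + 1) := by field_simp; ring
end

section
/- Let S be a nonempty finite multiset of real numbers all bounded in absolute value by c, and let S' = S + s for one additional element s with |s| ≤ c. Then |var(S) − var(S')| ≤ 12c² / max(|S|, |S'|), where var(S) = (1/|S|²)·Σ_{y,y'∈S} (y − y')². -/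
/-- `mvar S = (1/|S|²) Σ_{y,y'∈S} (y−y')²` (sum over ordered pairs of the multiset). -/
noncomputable def mvar (S : Multiset ℝ) : ℝ :=
  (S.bind fun y => S.map fun y' => (y - y') ^ 2).sum / (S.card : ℝ) ^ 2

/-- Inserting one element bounded by `c` into a nonempty multiset of reals bounded
by `c` changes `var` by at most `12c²/max(|S|,|S'|)`. -/
theorem stmt4 (S : Multiset ℝ) (hS : S ≠ 0) (c : ℝ) (hb : ∀ y ∈ S, |y| ≤ c)
    (s : ℝ) (hs : |s| ≤ c) :
    |mvar S - mvar (s ::ₘ S)| ≤ 12 * c ^ 2 / ((max S.card (s ::ₘ S).card : ℕ) : ℝ) := by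
  have hc : 0 ≤ c := le_trans (abs_nonneg s) hs
  obtain ⟨hs1, hs2⟩ := abs_le.mp hs
  set T : ℝ := (S.bind fun y => S.map fun y' => (y - y') ^ 2).sum with hTdef
  set D : ℝ := (S.map fun y => (y - s) ^ 2).sum with hDdef
  set n := S.card with hn
  have hn1 : 1 ≤ n := Multiset.card_pos.mpr hS
  set N : ℝ := (n : ℝ) with hNdef
  have hN1 : (1 : ℝ) ≤ N := by rw [hNdef]; exact_mod_cast hn1
  have hNpos : 0 < N := lt_of_lt_of_le one_pos hN1
  -- pointwise bound on squared differences
  have hterm : ∀ a b : ℝ, |a| ≤ c → |b| ≤ c → (a - b) ^ 2 ≤ 4 * c ^ 2 := by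
    intro a b ha hb
    obtain ⟨ha1, ha2⟩ := abs_le.mp ha
    obtain ⟨hb1, hb2⟩ := abs_le.mp hb
    nlinarith [sq_nonneg (a - b), sq_nonneg (a + b)]
  -- bound on T
  have hT0 : 0 ≤ T := by
    apply Multiset.sum_nonneg
    intro x hx
    obtain ⟨y, hy, hx⟩ := Multiset.mem_bind.mp hx
    obtain ⟨y', hy', rfl⟩ := Multiset.mem_map.mp hx
    exact sq_nonneg _
  have hinner : ∀ y ∈ S, (S.map fun y' => (y - y') ^ 2).sum ≤ N * (4 * c ^ 2) := by
    intro y hy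
    have h := Multiset.sum_le_card_nsmul (S.map fun y' => (y - y') ^ 2) (4 * c ^ 2) ?_
    · simpa [Multiset.card_map, nsmul_eq_mul] using h
    · intro x hx
      obtain ⟨y', hy', rfl⟩ := Multiset.mem_map.mp hx
      exact hterm y y' (hb y hy) (hb y' hy')
  have hTle : T ≤ 4 * c ^ 2 * N ^ 2 := by
    rw [hTdef, Multiset.sum_bind]
    calc (S.map fun y => (S.map fun y' => (y - y') ^ 2).sum).sum
        ≤ n • (N * (4 * c ^ 2)) := by
          apply Multiset.sum_le_card_nsmul _ _ ?_ |>.trans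
          · rw [Multiset.card_map]
          · intro x hx
            obtain ⟨y, hy, rfl⟩ := Multiset.mem_map.mp hx
            exact hinner y hy
      _ = 4 * c ^ 2 * N ^ 2 := by
          rw [nsmul_eq_mul]; ring
  -- bounds on D
  have hD0 : 0 ≤ D := Multiset.sum_nonneg (by
    intro x hx
    obtain ⟨y, hy, rfl⟩ := Multiset.mem_map.mp hx
    exact sq_nonneg _)
  have hDle : D ≤ 4 * c ^ 2 * N := by
    have h := Multiset.sum_le_card_nsmul (S.map fun y => (y - s) ^ 2) (4 * c ^ 2) ?_
    · rw [Multiset.card_map] at h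
      rw [hDdef]
      calc (S.map fun y => (y - s) ^ 2).sum ≤ n • (4 * c ^ 2) := h
        _ = 4 * c ^ 2 * N := by rw [nsmul_eq_mul]; ring
    · intro x hx
      obtain ⟨y, hy, rfl⟩ := Multiset.mem_map.mp hx
      exact hterm y s (hb y hy) hs
  -- the key sum identity
  have key : ((s ::ₘ S).bind fun y => (s ::ₘ S).map fun y' => (y - y') ^ 2).sum = T + 2 * D := by
    rw [Multiset.cons_bind, Multiset.sum_add]
    simp only [Multiset.map_cons, Multiset.sum_cons, Multiset.sum_bind]
    have h1 : (S.map fun y' => (s - y') ^ 2).sum = D := by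
      rw [hDdef]
      congr 1
      apply Multiset.map_congr rfl
      intro y hy; ring
    have h2 : (S.map fun y => (y - s) ^ 2 + (S.map fun y' => (y - y') ^ 2).sum).sum
        = D + T := by
      rw [Multiset.sum_map_add, hTdef, Multiset.sum_bind, hDdef]
    rw [h1, h2]
    rw [hTdef, Multiset.sum_bind]
    ring
  -- cards
  have hcard : (s ::ₘ S).card = n + 1 := by rw [Multiset.card_cons]
  have hmax : max S.card (s ::ₘ S).card = n + 1 := by
    rw [hcard, ← hn, max_eq_right (Nat.le_succ n)]
  rw [hmax]
  have hcast : ((n + 1 : ℕ) : ℝ) = N + 1 := by push_cast [hNdef]; ring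
  rw [hcast]
  have hm1 : mvar S = T / N ^ 2 := rfl
  have hm2 : mvar (s ::ₘ S) = (T + 2 * D) / (N + 1) ^ 2 := by
    rw [mvar, key, hcard]; push_cast; ring_nf; rw [hNdef]
  rw [hm1, hm2]
  have hN2 : (N : ℝ) ^ 2 ≠ 0 := by positivity
  have hN12 : ((N : ℝ) + 1) ^ 2 ≠ 0 := by positivity
  rw [abs_le]
  constructor
  · rw [neg_le, neg_sub, div_sub_div _ _ hN12 hN2, div_le_div_iff₀ (by positivity) (by positivity)]
    nlinarith [mul_nonneg hT0 hNpos.le, mul_nonneg (mul_nonneg hT0 hNpos.le) hNpos.le,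
      mul_le_mul_of_nonneg_right hDle (by positivity : (0:ℝ) ≤ N ^ 2 * (N + 1)),
      sq_nonneg c, mul_nonneg (sq_nonneg c) hNpos.le]
  · rw [div_sub_div _ _ hN2 hN12, div_le_div_iff₀ (by positivity) (by positivity)]
    nlinarith [mul_nonneg hD0 (by positivity : (0:ℝ) ≤ N ^ 2 * (N + 1)),
      mul_le_mul_of_nonneg_right hTle (by positivity : (0:ℝ) ≤ (2 * N + 1) * (N + 1)),
      sq_nonneg c, mul_nonneg (sq_nonneg c) hNpos.le,
      mul_nonneg (mul_nonneg (sq_nonneg c) hNpos.le) hNpos.le]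
end

section
/- Let g be a function from nonempty finite multisets of labeled examples to nonnegative reals, and let f : ℕ → ℝ be nondecreasing such that g(S) ≤ f(|S|) for all S, and |g(S) − g(S')| ≤ f(max(|S|,|S'|))/max(|S|,|S'|) whenever the symmetric difference △(S,S') ≤ 1. Then for all S, S': |g(S) − g(S')| ≤ 3·ED*(S,S')·f(max(|S|,|S'|)), where ED*(S,S') = △(S,S')/max(|S|,|S'|). -/
/-- Edit distance (symmetric difference size) of two multisets. -/
def symmDist {α : Type*} [DecidableEq α] (S S' : Multiset α) : ℕ :=
  (S - S').card + (S' - S).card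

/-- Relative edit distance `ED*(S,S') = △(S,S') / max(|S|,|S'|)`. -/
noncomputable def edStar {α : Type*} [DecidableEq α] (S S' : Multiset α) : ℝ :=
  (symmDist S S' : ℝ) / ((max S.card S'.card : ℕ) : ℝ)

lemma chain_bound {α : Type*} [DecidableEq α] (g : Multiset α → ℝ) (f : ℕ → ℝ)
    (hf : Monotone f)
    (hg0 : ∀ S : Multiset α, S ≠ 0 → 0 ≤ g S)
    (hgb : ∀ S : Multiset α, S ≠ 0 → g S ≤ f S.card)
    (hsm : ∀ S S' : Multiset α, S ≠ 0 → S' ≠ 0 → symmDist S S' ≤ 1 →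
      |g S - g S'| ≤ f (max S.card S'.card) / ((max S.card S'.card : ℕ) : ℝ)) :
    ∀ k : ℕ, ∀ S S' : Multiset α, S' ≤ S → S' ≠ 0 → S.card = S'.card + k →
      |g S - g S'| ≤ k * f S.card / S'.card := by
  intro k
  induction k with
  | zero =>
    intro S S' hle hne hcard
    have : S' = S := Multiset.eq_of_le_of_card_le hle (by omega)
    subst this
    simp
  | succ k ih =>
    intro S S' hle hne hcard
    have hc' : 0 < S'.card := Multiset.card_pos.mpr hne
    have hsub : (S - S').card = k + 1 := by
      rw [Multiset.card_sub hle]; omega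
    obtain ⟨x, hx⟩ : ∃ x, x ∈ S - S' := Multiset.exists_mem_of_ne_zero (by
      intro h; rw [h] at hsub; simp at hsub)
    have hcount : S'.count x < S.count x := by
      have := Multiset.count_pos.mpr hx
      rw [Multiset.count_sub] at this
      omega
    have hxS : x ∈ S := by
      rw [← Multiset.count_pos]; omega
    have hSne : S ≠ 0 := by
      intro h; rw [h] at hxS; simp at hxS
    set T := S.erase x with hT
    have hTle : T ≤ S := Multiset.erase_le x S
    have hTcard : T.card = S'.card + k := by
      rw [hT, Multiset.card_erase_of_mem hxS, Nat.pred_eq_sub_one]; omega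
    have hle' : S' ≤ T := by
      rw [Multiset.le_iff_count]
      intro a
      by_cases ha : a = x
      · subst ha
        rw [hT, Multiset.count_erase_self]
        omega
      · rw [hT, Multiset.count_erase_of_ne ha]
        exact Multiset.le_iff_count.mp hle a
    have hTne : T ≠ 0 := by
      intro h
      rw [h, Multiset.card_zero] at hTcard
      omega
    have hsd : symmDist S T ≤ 1 := by
      unfold symmDist
      rw [Multiset.card_sub hTle, tsub_eq_zero_of_le hTle, hTcard]
      simp
      omega
    have hmax : max S.card T.card = S.card := by
      rw [max_eq_left]; omega
    have h1 : |g S - g T| ≤ f S.card / (S.card : ℝ) := by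
      have := hsm S T hSne hTne hsd
      rwa [hmax] at this
    have h2 : |g T - g S'| ≤ k * f T.card / S'.card := ih T S' hle' hne hTcard
    have hfS'0 : 0 ≤ f S'.card := le_trans (hg0 S' hne) (hgb S' hne)
    have hfT : f T.card ≤ f S.card := hf (by omega)
    have hfT0 : 0 ≤ f T.card := le_trans hfS'0 (hf (by omega))
    have hfS0 : 0 ≤ f S.card := le_trans hfT0 hfT
    have hcR : (0:ℝ) < S'.card := by exact_mod_cast hc'
    have hnR : (0:ℝ) < S.card := by exact_mod_cast (by omega : 0 < S.card)
    have hcle : (S'.card:ℝ) ≤ S.card := by exact_mod_cast (by omega : S'.card ≤ S.card)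
    calc |g S - g S'| ≤ |g S - g T| + |g T - g S'| := abs_sub_le _ _ _
      _ ≤ f S.card / (S.card : ℝ) + k * f T.card / S'.card := add_le_add h1 h2
      _ ≤ f S.card / (S'.card : ℝ) + k * f S.card / S'.card := by gcongr
      _ = (k+1 : ℕ) * f S.card / S'.card := by push_cast; ring

/-- If `g` is nonnegative, bounded by a nondecreasing `f` of the size, and
`f(max)/max`-smooth under single edits, then `|g(S) − g(S')| ≤ 3·ED*(S,S')·f(max(|S|,|S'|))`. -/
theorem stmt6 {α : Type*} [DecidableEq α] (g : Multiset α → ℝ) (f : ℕ → ℝ)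
    (hf : Monotone f)
    (hg0 : ∀ S : Multiset α, S ≠ 0 → 0 ≤ g S)
    (hgb : ∀ S : Multiset α, S ≠ 0 → g S ≤ f S.card)
    (hsm : ∀ S S' : Multiset α, S ≠ 0 → S' ≠ 0 → symmDist S S' ≤ 1 →
      |g S - g S'| ≤ f (max S.card S'.card) / ((max S.card S'.card : ℕ) : ℝ))
    (S S' : Multiset α) (hS : S ≠ 0) (hS' : S' ≠ 0) :
    |g S - g S'| ≤ 3 * edStar S S' * f (max S.card S'.card) := by
  set n := max S.card S'.card with hn
  set d := symmDist S S' with hd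
  have hSc : 0 < S.card := Multiset.card_pos.mpr hS
  have hS'c : 0 < S'.card := Multiset.card_pos.mpr hS'
  have hnpos : 0 < n := lt_of_lt_of_le hSc (le_max_left _ _)
  have hnR : (0:ℝ) < n := by exact_mod_cast hnpos
  have hfn0 : 0 ≤ f n := le_trans (hg0 S hS)
    (le_trans (hgb S hS) (hf (le_max_left _ _)))
  have hgSb : g S ≤ f n := le_trans (hgb S hS) (hf (le_max_left _ _))
  have hgS'b : g S' ≤ f n := le_trans (hgb S' hS') (hf (le_max_right _ _))
  rw [edStar, ← hn, ← hd]
  by_cases hd0 : d = 0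
  · have hdd : (S - S').card + (S' - S).card = 0 := by
      rw [hd] at hd0; unfold symmDist at hd0; exact hd0
    have h1 : S - S' = 0 := Multiset.card_eq_zero.mp (by omega)
    have h2 : S' - S = 0 := Multiset.card_eq_zero.mp (by omega)
    have : S = S' := le_antisymm (tsub_eq_zero_iff_le.mp h1)
      (tsub_eq_zero_iff_le.mp h2)
    subst this
    simp [hd0]
  · by_cases hcase : n ≤ 3 * d
    · -- crude bound
      have hcrude : |g S - g S'| ≤ f n := by
        rw [abs_sub_le_iff]
        constructor
        · linarith [hg0 S' hS']
        · linarith [hg0 S hS]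
      have hone : (1:ℝ) ≤ 3 * ((d:ℝ)/n) := by
        rw [← mul_div_assoc, le_div_iff₀ hnR, one_mul]
        exact_mod_cast hcase
      calc |g S - g S'| ≤ f n := hcrude
        _ = 1 * f n := (one_mul _).symm
        _ ≤ 3 * ((d:ℝ)/n) * f n := mul_le_mul_of_nonneg_right hone hfn0
    · push_neg at hcase
      set T := S ∩ S' with hT
      have hTleS : T ≤ S := Multiset.inter_le_left
      have hTleS' : T ≤ S' := Multiset.inter_le_right
      have ha : (S - S').card = S.card - T.card := by
        rw [hT, ← Multiset.sub_inter S S',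
          Multiset.card_sub (Multiset.inter_le_left : S ∩ S' ≤ S)]
      have ha' : T.card ≤ S.card := Multiset.card_le_card hTleS
      have hb : (S' - S).card = S'.card - T.card := by
        rw [hT, Multiset.inter_comm, ← Multiset.sub_inter S' S,
          Multiset.card_sub (Multiset.inter_le_left : S' ∩ S ≤ S')]
      have hb' : T.card ≤ S'.card := Multiset.card_le_card hTleS'
      have hdd : d = (S - S').card + (S' - S).card := hd
      have hdab : d = (S.card - T.card) + (S'.card - T.card) := by omega
      have hnval : n = max S.card S'.card := hn
      have hTbig : n ≤ 3 * T.card := by omega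
      have hTpos : 0 < T.card := by omega
      have hTne : T ≠ 0 := by
        intro h; rw [h, Multiset.card_zero] at hTpos; omega
      have hScard : S.card = T.card + (S.card - T.card) := by omega
      have hS'card : S'.card = T.card + (S'.card - T.card) := by omega
      have h1 := chain_bound g f hf hg0 hgb hsm (S.card - T.card) S T hTleS hTne hScard
      have h2 := chain_bound g f hf hg0 hgb hsm (S'.card - T.card) S' T hTleS' hTne hS'card
      have hfS : f S.card ≤ f n := hf (le_max_left _ _)
      have hfS' : f S'.card ≤ f n := hf (le_max_right _ _)
      have hTR : (0:ℝ) < T.card := by exact_mod_cast hTpos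
      have h1' : |g S - g T| ≤ (S.card - T.card : ℕ) * f n / T.card := by
        refine le_trans h1 ?_
        gcongr
      have h2' : |g S' - g T| ≤ (S'.card - T.card : ℕ) * f n / T.card := by
        refine le_trans h2 ?_
        gcongr
      have hsum : |g S - g S'| ≤ (d:ℝ) * f n / T.card := by
        calc |g S - g S'| ≤ |g S - g T| + |g T - g S'| := abs_sub_le _ _ _
          _ = |g S - g T| + |g S' - g T| := by rw [abs_sub_comm (g T)]
          _ ≤ (S.card - T.card : ℕ) * f n / T.card
              + (S'.card - T.card : ℕ) * f n / T.card := add_le_add h1' h2'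
          _ = (d:ℝ) * f n / T.card := by
              rw [← add_div, ← add_mul]
              congr 2
              exact_mod_cast hdab.symm
      refine le_trans hsum ?_
      rw [div_le_iff₀ hTR]
      have h3T : (n:ℝ) ≤ 3 * T.card := by exact_mod_cast hTbig
      have hdR : (0:ℝ) ≤ d := by positivity
      have hone : (1:ℝ) ≤ 3 * (T.card:ℝ) / n := by
        rw [le_div_iff₀ hnR, one_mul]; exact h3T
      calc (d:ℝ) * f n = ((d:ℝ) * f n) * 1 := by ring
        _ ≤ ((d:ℝ) * f n) * (3 * (T.card:ℝ) / n) :=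
            mul_le_mul_of_nonneg_left hone (mul_nonneg hdR hfn0)
        _ = 3 * ((d:ℝ)/n) * f n * T.card := by ring
end

section
/- Let σ be a split rule and let GiniGain(S,σ) = Gini(S) − (|S₀|/|S|)Gini(S₀) − (|S₁|/|S|)Gini(S₁) where (S₀,S₁) = σ(S). Then for all nonempty finite multisets S, S' of labeled examples: |GiniGain(S,σ) − GiniGain(S',σ)| ≤ 48·ED*(S,S'). -/
/-- Gini impurity of a multiset of labeled examples, labels given by `lab : α → Fin k`. -/
noncomputable def giniImp {α : Type*} {k : ℕ} (lab : α → Fin k) (S : Multiset α) : ℝ :=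
  1 - ∑ i : Fin k, (((S.filter fun x => lab x = i).card : ℝ) / (S.card : ℝ)) ^ 2

/-- Gini gain of a split rule `σ` on `S`. -/
noncomputable def giniGain {α : Type*} {k : ℕ} (lab : α → Fin k) (σ : α → Bool)
    (S : Multiset α) : ℝ :=
  giniImp lab S
    - ((S.filter fun x => σ x = false).card : ℝ) / (S.card : ℝ) *
        giniImp lab (S.filter fun x => σ x = false)
    - ((S.filter fun x => σ x = true).card : ℝ) / (S.card : ℝ) *
        giniImp lab (S.filter fun x => σ x = true)


set_option linter.unusedSectionVars false
set_option maxHeartbeats 1000000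

section Aux

variable {α : Type*} [DecidableEq α] {k : ℕ}

lemma frac_term (c c' m m' : ℝ) (hm : 0 < m) (hmm : m ≤ m') (hc : 0 ≤ c) :
    |c / m - c' / m'| ≤ |c - c'| / m' + c * (m' - m) / (m * m') := by
  have hm' : 0 < m' := lt_of_lt_of_le hm hmm
  have h : c / m - c' / m' = (c - c') / m' + c * (m' - m) / (m * m') := by
    field_simp; ring
  rw [h]
  refine (abs_add_le _ _).trans ?_
  have h1 : |(c - c') / m'| = |c - c'| / m' := by rw [abs_div, abs_of_pos hm']
  have h2 : |c * (m' - m) / (m * m')| = c * (m' - m) / (m * m') :=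
    abs_of_nonneg (div_nonneg (mul_nonneg hc (by linarith)) (by positivity))
  rw [h1, h2]

lemma frac_sum {k : ℕ} (c c' : Fin k → ℝ) (m m' : ℝ) (hm : 0 < m) (hmm : m ≤ m')
    (hc : ∀ i, 0 ≤ c i) (hs : ∑ i, c i ≤ m) :
    ∑ i, |c i / m - c' i / m'| ≤ ((∑ i, |c i - c' i|) + (m' - m)) / m' := by
  have hm' : 0 < m' := lt_of_lt_of_le hm hmm
  have step : ∑ i, |c i / m - c' i / m'|
      ≤ ∑ i, (|c i - c' i| / m' + c i * ((m' - m) / (m * m'))) := by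
    refine Finset.sum_le_sum fun i _ => ?_
    have := frac_term (c i) (c' i) m m' hm hmm (hc i)
    rw [mul_div_assoc] at this
    exact this
  refine step.trans ?_
  rw [Finset.sum_add_distrib, ← Finset.sum_div, ← Finset.sum_mul]
  have h1 : (∑ i, c i) * ((m' - m) / (m * m')) ≤ m * ((m' - m) / (m * m')) :=
    mul_le_mul_of_nonneg_right hs (div_nonneg (by linarith) (by positivity))
  have h2 : m * ((m' - m) / (m * m')) = (m' - m) / m' := by
    field_simp
  rw [add_div]
  linarith

lemma frac_sum_symm {k : ℕ} (c c' : Fin k → ℝ) (m m' : ℝ) (hm : 0 < m) (hm' : 0 < m')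
    (hc : ∀ i, 0 ≤ c i) (hc' : ∀ i, 0 ≤ c' i) (hs : ∑ i, c i ≤ m) (hs' : ∑ i, c' i ≤ m') :
    ∑ i, |c i / m - c' i / m'| ≤ ((∑ i, |c i - c' i|) + |m - m'|) / max m m' := by
  rcases le_total m m' with h | h
  · rw [max_eq_right h, abs_of_nonpos (by linarith : m - m' ≤ 0), neg_sub]
    exact frac_sum c c' m m' hm h hc hs
  · rw [max_eq_left h, abs_of_nonneg (by linarith : 0 ≤ m - m')]
    have := frac_sum c' c m' m hm' h hc' hs'
    simp only [abs_sub_comm (c' _) (c _)] at this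
    calc ∑ i, |c i / m - c' i / m'| = ∑ i, |c' i / m' - c i / m| := by
          simp only [abs_sub_comm]
      _ ≤ _ := this

lemma frac_two (c c' m m' : ℝ) (hm : 0 < m) (hmm : m ≤ m') (hc : 0 ≤ c) (hcm : c ≤ m) :
    |c / m - c' / m'| ≤ (|c - c'| + (m' - m)) / m' := by
  have hm' : 0 < m' := lt_of_lt_of_le hm hmm
  have h1 := frac_term c c' m m' hm hmm hc
  have h2 : c * (m' - m) / (m * m') ≤ (m' - m) / m' := by
    rw [div_le_div_iff₀ (by positivity) hm']
    nlinarith [mul_nonneg (sub_nonneg.mpr hmm) hm'.le]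
  rw [add_div]
  linarith

lemma abs3 (x y z : ℝ) : |x - y - z| ≤ |x| + |y| + |z| := by
  calc |x - y - z| ≤ |x - y| + |z| := abs_sub _ _
    _ ≤ |x| + |y| + |z| := by have := abs_sub x y; linarith

lemma sum_card_filter (lab : α → Fin k) (T : Multiset α) :
    ∑ i : Fin k, (T.filter fun x => lab x = i).card = T.card := by
  induction T using Multiset.induction_on with
  | empty => simp
  | cons a T ih =>
    simp only [Multiset.filter_cons, Multiset.card_add, Finset.sum_add_distrib, ih,
      Multiset.card_cons, apply_ite Multiset.card, Multiset.card_singleton, Multiset.card_zero]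
    rw [Finset.sum_ite_eq]
    simp [add_comm]

lemma card_filter_tri (p : α → Prop) [DecidablePred p] (S S' : Multiset α) :
    (S.filter p).card ≤ ((S - S').filter p).card + (S'.filter p).card := by
  have h : S.filter p ≤ (S - S').filter p + S'.filter p := by
    rw [← Multiset.filter_add]
    exact Multiset.filter_le_filter p le_tsub_add
  simpa using Multiset.card_le_card h

lemma card_tri (S S' : Multiset α) : S.card ≤ (S - S').card + S'.card := by
  simpa using Multiset.card_le_card (le_tsub_add : S ≤ S - S' + S')

lemma abs_card_sub_le (S S' : Multiset α) :
    |(S.card : ℝ) - (S'.card : ℝ)| ≤ (symmDist S S' : ℝ) := by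
  have h1 := card_tri S S'
  have h2 := card_tri S' S
  have h1' : (S.card : ℝ) ≤ ((S - S').card : ℝ) + (S'.card : ℝ) := by exact_mod_cast h1
  have h2' : (S'.card : ℝ) ≤ ((S' - S).card : ℝ) + (S.card : ℝ) := by exact_mod_cast h2
  rw [abs_sub_le_iff]
  constructor <;> · unfold symmDist; push_cast; linarith

lemma symmDist_filter_le (q : α → Prop) [DecidablePred q] (S S' : Multiset α) :
    symmDist (S.filter q) (S'.filter q) ≤ symmDist S S' := by
  unfold symmDist
  rw [← Multiset.filter_sub, ← Multiset.filter_sub]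
  exact add_le_add (Multiset.card_le_card (Multiset.filter_le _ _))
    (Multiset.card_le_card (Multiset.filter_le _ _))

lemma sum_abs_counts_le (lab : α → Fin k) (T T' : Multiset α) :
    ∑ i : Fin k, |((T.filter fun x => lab x = i).card : ℝ)
        - ((T'.filter fun x => lab x = i).card : ℝ)| ≤ (symmDist T T' : ℝ) := by
  have step : ∀ i : Fin k, |((T.filter fun x => lab x = i).card : ℝ)
      - ((T'.filter fun x => lab x = i).card : ℝ)|
      ≤ (((T - T').filter fun x => lab x = i).card : ℝ)
        + (((T' - T).filter fun x => lab x = i).card : ℝ) := by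
    intro i
    have h1 := card_filter_tri (fun x => lab x = i) T T'
    have h2 := card_filter_tri (fun x => lab x = i) T' T
    have h1' : ((T.filter fun x => lab x = i).card : ℝ)
        ≤ (((T - T').filter fun x => lab x = i).card : ℝ)
          + ((T'.filter fun x => lab x = i).card : ℝ) := by exact_mod_cast h1
    have h2' : ((T'.filter fun x => lab x = i).card : ℝ)
        ≤ (((T' - T).filter fun x => lab x = i).card : ℝ)
          + ((T.filter fun x => lab x = i).card : ℝ) := by exact_mod_cast h2
    rw [abs_sub_le_iff]
    constructor <;> linarith
  calc ∑ i : Fin k, |((T.filter fun x => lab x = i).card : ℝ)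
        - ((T'.filter fun x => lab x = i).card : ℝ)|
      ≤ ∑ i : Fin k, ((((T - T').filter fun x => lab x = i).card : ℝ)
        + (((T' - T).filter fun x => lab x = i).card : ℝ)) :=
        Finset.sum_le_sum fun i _ => step i
    _ = (symmDist T T' : ℝ) := by
        rw [Finset.sum_add_distrib]
        unfold symmDist
        push_cast [← sum_card_filter lab (T - T'), ← sum_card_filter lab (T' - T)]
        ring

lemma f_formula (lab : α → Fin k) (n : ℝ) (T : Multiset α) :
    ((T.card : ℝ) / n) * giniImp lab T
      = (T.card : ℝ) / n - ∑ i : Fin k, (((T.filter fun x => lab x = i).card : ℝ) / n)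
          * (((T.filter fun x => lab x = i).card : ℝ) / (T.card : ℝ)) := by
  rcases eq_or_ne T 0 with rfl | hT
  · simp [giniImp]
  · have hm : ((T.card : ℕ) : ℝ) ≠ 0 :=
      Nat.cast_ne_zero.mpr fun h => hT (Multiset.card_eq_zero.mp h)
    unfold giniImp
    rw [mul_sub, mul_one, Finset.mul_sum]
    congr 1
    refine Finset.sum_congr rfl fun i _ => ?_
    set c := ((T.filter fun x => lab x = i).card : ℝ)
    calc (T.card : ℝ)/n * (c/(T.card : ℝ))^2
        = (c*c)/(n*(T.card : ℝ)) * ((T.card : ℝ)/(T.card : ℝ)) := by rw [pow_two]; ring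
      _ = c/n * (c/(T.card : ℝ)) := by rw [div_self hm, mul_one]; ring

lemma gini_diff (lab : α → Fin k) (T T' : Multiset α) (hT : T ≠ 0) (hT' : T' ≠ 0)
    (hle : T.card ≤ T'.card) :
    |giniImp lab T - giniImp lab T'| ≤ 4 * (symmDist T T' : ℝ) / (T'.card : ℝ) := by
  set m := (T.card : ℝ) with hmdef
  set m' := (T'.card : ℝ) with hm'def
  have hm : 0 < m := by rw [hmdef]; exact_mod_cast Multiset.card_pos.mpr hT
  have hm' : 0 < m' := by rw [hm'def]; exact_mod_cast Multiset.card_pos.mpr hT'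
  have hmm : m ≤ m' := Nat.cast_le.mpr hle
  set c : Fin k → ℝ := fun i => ((T.filter fun x => lab x = i).card : ℝ) with hcdef
  set c' : Fin k → ℝ := fun i => ((T'.filter fun x => lab x = i).card : ℝ) with hc'def
  have hc : ∀ i, 0 ≤ c i := fun i => Nat.cast_nonneg _
  have hsum : ∑ i, c i = m := by
    simp only [hcdef, hmdef]
    exact_mod_cast sum_card_filter lab T
  have hcm : ∀ i, c i ≤ m := fun i =>
    Nat.cast_le.mpr (Multiset.card_le_card (Multiset.filter_le _ _))
  have hcm' : ∀ i, c' i ≤ m' := fun i =>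
    Nat.cast_le.mpr (Multiset.card_le_card (Multiset.filter_le _ _))
  have hd : (symmDist T T' : ℝ) ≥ 0 := Nat.cast_nonneg _
  have step1 : giniImp lab T - giniImp lab T'
      = ∑ i, ((c' i / m') ^ 2 - (c i / m) ^ 2) := by
    unfold giniImp
    rw [Finset.sum_sub_distrib]
    ring
  have step3 : ∀ i : Fin k, |(c' i / m') ^ 2 - (c i / m) ^ 2|
      ≤ 2 * |c i / m - c' i / m'| := by
    intro i
    have hp0 : 0 ≤ c i / m := div_nonneg (hc i) hm.le
    have hp1 : c i / m ≤ 1 := (div_le_one hm).mpr (hcm i)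
    have hq0 : 0 ≤ c' i / m' := div_nonneg (Nat.cast_nonneg _) hm'.le
    have hq1 : c' i / m' ≤ 1 := (div_le_one hm').mpr (hcm' i)
    rw [show (c' i / m') ^ 2 - (c i / m) ^ 2
        = (c' i / m' - c i / m) * (c' i / m' + c i / m) from by ring, abs_mul,
      abs_sub_comm]
    have : |c' i / m' + c i / m| ≤ 2 := by rw [abs_of_nonneg (by linarith)]; linarith
    calc |c i / m - c' i / m'| * |c' i / m' + c i / m|
        ≤ |c i / m - c' i / m'| * 2 := mul_le_mul_of_nonneg_left this (abs_nonneg _)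
      _ = 2 * |c i / m - c' i / m'| := by ring
  have hfs := frac_sum c c' m m' hm hmm hc hsum.le
  have hsac := sum_abs_counts_le lab T T'
  have hcard : m' - m ≤ (symmDist T T' : ℝ) := by
    have := abs_card_sub_le T T'
    rw [abs_sub_le_iff] at this
    exact this.2
  calc |giniImp lab T - giniImp lab T'|
      = |∑ i, ((c' i / m') ^ 2 - (c i / m) ^ 2)| := by rw [step1]
    _ ≤ ∑ i, |(c' i / m') ^ 2 - (c i / m) ^ 2| := Finset.abs_sum_le_sum_abs _ _
    _ ≤ ∑ i, 2 * |c i / m - c' i / m'| := Finset.sum_le_sum fun i _ => step3 i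
    _ = 2 * ∑ i, |c i / m - c' i / m'| := by rw [Finset.mul_sum]
    _ ≤ 2 * (((∑ i, |c i - c' i|) + (m' - m)) / m') := by linarith
    _ ≤ 2 * (((symmDist T T' : ℝ) + (symmDist T T' : ℝ)) / m') := by
        gcongr
    _ = 4 * (symmDist T T' : ℝ) / m' := by ring

lemma branch_diff (lab : α → Fin k) (q : α → Prop) [DecidablePred q] (S S' : Multiset α)
    (hS : S ≠ 0) (hS' : S' ≠ 0) (hle : S.card ≤ S'.card) :
    |((S.filter q).card : ℝ) / (S.card : ℝ) * giniImp lab (S.filter q)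
      - ((S'.filter q).card : ℝ) / (S'.card : ℝ) * giniImp lab (S'.filter q)|
      ≤ 6 * (symmDist S S' : ℝ) / (S'.card : ℝ) := by
  rw [show ((S.filter q).card : ℝ) / (S.card : ℝ) * giniImp lab (S.filter q)
      = (((S.filter q).card : ℝ) / (S.card : ℝ)) * giniImp lab (S.filter q) from rfl,
    f_formula lab (S.card : ℝ) (S.filter q), f_formula lab (S'.card : ℝ) (S'.filter q)]
  set T := S.filter q with hTdef
  set T' := S'.filter q with hT'def
  set n := (S.card : ℝ) with hndef
  set n' := (S'.card : ℝ) with hn'def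
  set m := (T.card : ℝ) with hmdef
  set m' := (T'.card : ℝ) with hm'def
  set d := (symmDist S S' : ℝ) with hddef
  set c : Fin k → ℝ := fun i => ((T.filter fun x => lab x = i).card : ℝ) with hcdef
  set c' : Fin k → ℝ := fun i => ((T'.filter fun x => lab x = i).card : ℝ) with hc'def
  have hn : 0 < n := by rw [hndef]; exact_mod_cast Multiset.card_pos.mpr hS
  have hn' : 0 < n' := by rw [hn'def]; exact_mod_cast Multiset.card_pos.mpr hS'
  have hnn : n ≤ n' := Nat.cast_le.mpr hle
  have hd0 : 0 ≤ d := Nat.cast_nonneg _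
  have hdT : (symmDist T T' : ℝ) ≤ d := by
    rw [hddef]; exact_mod_cast symmDist_filter_le q S S'
  have hm0 : 0 ≤ m := Nat.cast_nonneg _
  have hm'0 : 0 ≤ m' := Nat.cast_nonneg _
  have hmn : m ≤ n := Nat.cast_le.mpr (Multiset.card_le_card (Multiset.filter_le _ _))
  have hm'n' : m' ≤ n' := Nat.cast_le.mpr (Multiset.card_le_card (Multiset.filter_le _ _))
  have hc0 : ∀ i, 0 ≤ c i := fun i => Nat.cast_nonneg _
  have hc'0 : ∀ i, 0 ≤ c' i := fun i => Nat.cast_nonneg _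
  have hcm : ∀ i, c i ≤ m := fun i =>
    Nat.cast_le.mpr (Multiset.card_le_card (Multiset.filter_le _ _))
  have hc'm' : ∀ i, c' i ≤ m' := fun i =>
    Nat.cast_le.mpr (Multiset.card_le_card (Multiset.filter_le _ _))
  have hsumc : ∑ i, c i = m := by
    simp only [hcdef, hmdef]; exact_mod_cast sum_card_filter lab T
  have hsumc' : ∑ i, c' i = m' := by
    simp only [hc'def, hm'def]; exact_mod_cast sum_card_filter lab T'
  have habsm : |m - m'| ≤ d := (abs_card_sub_le T T').trans hdT
  have habsc : ∑ i, |c i - c' i| ≤ d := (sum_abs_counts_le lab T T').trans hdT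
  have hnd : n' - n ≤ d := by
    have := (abs_card_sub_le S S').trans_eq hddef.symm
    rw [abs_sub_le_iff] at this
    exact this.2
  -- bound A : the weight term
  have hA : |m / n - m' / n'| ≤ (d + d) / n' := by
    refine (frac_two m m' n n' hn hnn hm0 hmn).trans ?_
    gcongr
  -- bound S1
  have hS1 : ∑ i, |c i / n - c' i / n'| ≤ (d + d) / n' := by
    refine (frac_sum c c' n n' hn hnn hc0 (hsumc ▸ hmn)).trans ?_
    gcongr
  -- bound S2
  have hS2 : ∑ i, (c' i / n') * |c i / m - c' i / m'| ≤ (d + d) / n' := by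
    rcases eq_or_ne T' 0 with h0 | hT'ne
    · have hz : ∀ i, c' i = 0 := by intro i; simp [hc'def, h0]
      simp only [hz, zero_div, zero_mul, Finset.sum_const_zero]
      positivity
    rcases eq_or_ne T 0 with h0 | hTne
    · have hz : ∀ i, c i = 0 := by intro i; simp [hcdef, h0]
      have hmz : m = 0 := by simp [hmdef, h0]
      have hm'd : m' ≤ d := by
        rw [hmz] at habsm
        rwa [zero_sub, abs_neg, abs_of_nonneg hm'0] at habsm
      have step : ∀ i, (c' i / n') * |c i / m - c' i / m'| ≤ c' i / n' := by
        intro i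
        rw [hz i, zero_div, zero_sub, abs_neg]
        have hb' : |c' i / m'| ≤ 1 := by
          rw [abs_of_nonneg (div_nonneg (hc'0 i) hm'0)]
          exact div_le_one_of_le₀ (hc'm' i) hm'0
        exact mul_le_of_le_one_right (div_nonneg (hc'0 i) hn'.le) hb'
      calc ∑ i, (c' i / n') * |c i / m - c' i / m'| ≤ ∑ i, c' i / n' :=
            Finset.sum_le_sum fun i _ => step i
        _ = m' / n' := by rw [← Finset.sum_div, hsumc']
        _ ≤ (d + d) / n' := by gcongr; linarith
    · have hmpos : 0 < m := by
        rw [hmdef]; exact_mod_cast Multiset.card_pos.mpr hTne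
      have hm'pos : 0 < m' := by
        rw [hm'def]; exact_mod_cast Multiset.card_pos.mpr hT'ne
      have hMpos : 0 < max m m' := lt_max_of_lt_left hmpos
      have step : ∑ i, (c' i / n') * |c i / m - c' i / m'|
          ≤ (m' / n') * ∑ i, |c i / m - c' i / m'| := by
        rw [Finset.mul_sum]
        refine Finset.sum_le_sum fun i _ => ?_
        have hle' : c' i / n' ≤ m' / n' := by gcongr; exact hc'm' i
        exact mul_le_mul_of_nonneg_right hle' (abs_nonneg _)
      refine step.trans ?_
      have hfss := frac_sum_symm c c' m m' hmpos hm'pos hc0 hc'0 hsumc.le hsumc'.le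
      have h2 : (m' / n') * ∑ i, |c i / m - c' i / m'|
          ≤ (m' / n') * (((∑ i, |c i - c' i|) + |m - m'|) / max m m') :=
        mul_le_mul_of_nonneg_left hfss (div_nonneg hm'0 hn'.le)
      refine h2.trans ?_
      have h3 : (m' / n') * (((∑ i, |c i - c' i|) + |m - m'|) / max m m')
          ≤ (m' / n') * ((d + d) / max m m') := by gcongr
      refine h3.trans ?_
      rw [div_mul_div_comm, div_le_div_iff₀ (by positivity) hn']
      have hmle : m' ≤ max m m' := le_max_right _ _
      nlinarith [mul_nonneg (mul_nonneg hm'0 hn'.le) (by linarith : (0:ℝ) ≤ d + d),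
        mul_nonneg hn'.le (by linarith : (0:ℝ) ≤ d + d)]
  -- per-term split
  have hsplit : ∀ i, |(c i / n) * (c i / m) - (c' i / n') * (c' i / m')|
      ≤ |c i / n - c' i / n'| + (c' i / n') * |c i / m - c' i / m'| := by
    intro i
    have e : (c i / n) * (c i / m) - (c' i / n') * (c' i / m')
        = (c i / n - c' i / n') * (c i / m) + (c' i / n') * (c i / m - c' i / m') := by
      ring
    rw [e]
    refine (abs_add_le _ _).trans ?_
    rw [abs_mul, abs_mul]
    have hb : |c i / m| ≤ 1 := by
      rw [abs_of_nonneg (div_nonneg (hc0 i) hm0)]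
      exact div_le_one_of_le₀ (hcm i) hm0
    have ha' : |c' i / n'| = c' i / n' := abs_of_nonneg (div_nonneg (hc'0 i) hn'.le)
    rw [ha']
    have := mul_le_mul_of_nonneg_left hb (abs_nonneg (c i / n - c' i / n'))
    linarith
  -- assemble
  have hB : |(∑ i, (c i / n) * (c i / m)) - ∑ i, (c' i / n') * (c' i / m')|
      ≤ (d + d) / n' + (d + d) / n' := by
    rw [← Finset.sum_sub_distrib]
    refine (Finset.abs_sum_le_sum_abs _ _).trans ?_
    calc ∑ i, |(c i / n) * (c i / m) - (c' i / n') * (c' i / m')|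
        ≤ ∑ i, (|c i / n - c' i / n'| + (c' i / n') * |c i / m - c' i / m'|) :=
          Finset.sum_le_sum fun i _ => hsplit i
      _ = (∑ i, |c i / n - c' i / n'|) + ∑ i, (c' i / n') * |c i / m - c' i / m'| :=
          Finset.sum_add_distrib
      _ ≤ (d + d) / n' + (d + d) / n' := add_le_add hS1 hS2
  calc |(m / n - ∑ i, (c i / n) * (c i / m)) - (m' / n' - ∑ i, (c' i / n') * (c' i / m'))|
      = |(m / n - m' / n') - ((∑ i, (c i / n) * (c i / m)) - ∑ i, (c' i / n') * (c' i / m'))| := by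
        congr 1
        ring
    _ ≤ |m / n - m' / n'|
        + |(∑ i, (c i / n) * (c i / m)) - ∑ i, (c' i / n') * (c' i / m')| := abs_sub _ _
    _ ≤ (d + d) / n' + ((d + d) / n' + (d + d) / n') := add_le_add hA hB
    _ = 6 * d / n' := by ring


lemma giniGain_diff_le (lab : α → Fin k) (σ : α → Bool) (S S' : Multiset α)
    (hS : S ≠ 0) (hS' : S' ≠ 0) (hle : S.card ≤ S'.card) :
    |giniGain lab σ S - giniGain lab σ S'| ≤ 16 * (symmDist S S' : ℝ) / (S'.card : ℝ) := by
  have hG := gini_diff lab S S' hS hS' hle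
  have hF0 := branch_diff lab (fun x => σ x = false) S S' hS hS' hle
  have hF1 := branch_diff lab (fun x => σ x = true) S S' hS hS' hle
  unfold giniGain
  calc |(giniImp lab S
        - ((S.filter fun x => σ x = false).card : ℝ) / (S.card : ℝ) *
            giniImp lab (S.filter fun x => σ x = false)
        - ((S.filter fun x => σ x = true).card : ℝ) / (S.card : ℝ) *
            giniImp lab (S.filter fun x => σ x = true))
      - (giniImp lab S'
        - ((S'.filter fun x => σ x = false).card : ℝ) / (S'.card : ℝ) *
            giniImp lab (S'.filter fun x => σ x = false)
        - ((S'.filter fun x => σ x = true).card : ℝ) / (S'.card : ℝ) *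
            giniImp lab (S'.filter fun x => σ x = true))|
      = |(giniImp lab S - giniImp lab S')
        - (((S.filter fun x => σ x = false).card : ℝ) / (S.card : ℝ) *
            giniImp lab (S.filter fun x => σ x = false)
          - ((S'.filter fun x => σ x = false).card : ℝ) / (S'.card : ℝ) *
            giniImp lab (S'.filter fun x => σ x = false))
        - (((S.filter fun x => σ x = true).card : ℝ) / (S.card : ℝ) *
            giniImp lab (S.filter fun x => σ x = true)
          - ((S'.filter fun x => σ x = true).card : ℝ) / (S'.card : ℝ) *
            giniImp lab (S'.filter fun x => σ x = true))| := by
        congr 1; ring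
    _ ≤ _ + _ + _ := abs3 _ _ _
    _ ≤ 4 * (symmDist S S' : ℝ) / (S'.card : ℝ) + 6 * (symmDist S S' : ℝ) / (S'.card : ℝ)
        + 6 * (symmDist S S' : ℝ) / (S'.card : ℝ) := by
        exact add_le_add (add_le_add hG hF0) hF1
    _ = 16 * (symmDist S S' : ℝ) / (S'.card : ℝ) := by ring

end Aux

/-- Smoothness of the Gini gain: `|GiniGain(S,σ) − GiniGain(S',σ)| ≤ 48·ED*(S,S')`. -/
theorem stmt8 {α : Type*} [DecidableEq α] {k : ℕ} (lab : α → Fin k) (σ : α → Bool)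
    (S S' : Multiset α) (hS : S ≠ 0) (hS' : S' ≠ 0) :
    |giniGain lab σ S - giniGain lab σ S'| ≤ 48 * edStar S S' := by
  rcases le_total S.card S'.card with h | h
  · have hk := giniGain_diff_le lab σ S S' hS hS' h
    have hn' : (0:ℝ) < (S'.card : ℝ) := by exact_mod_cast Multiset.card_pos.mpr hS'
    have hd0 : (0:ℝ) ≤ (symmDist S S' : ℝ) / (S'.card : ℝ) :=
      div_nonneg (Nat.cast_nonneg _) hn'.le
    unfold edStar
    rw [max_eq_right h]
    have e : 16 * (symmDist S S' : ℝ) / (S'.card : ℝ)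
        = 16 * ((symmDist S S' : ℝ) / (S'.card : ℝ)) := by ring
    rw [e] at hk
    linarith
  · have hk := giniGain_diff_le lab σ S' S hS' hS h
    have hsd : symmDist S' S = symmDist S S' := add_comm _ _
    have hn : (0:ℝ) < (S.card : ℝ) := by exact_mod_cast Multiset.card_pos.mpr hS
    have hd0 : (0:ℝ) ≤ (symmDist S S' : ℝ) / (S.card : ℝ) :=
      div_nonneg (Nat.cast_nonneg _) hn.le
    rw [abs_sub_comm]
    unfold edStar
    rw [max_eq_left h]
    rw [hsd] at hk
    have e : 16 * (symmDist S S' : ℝ) / (S.card : ℝ)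
        = 16 * ((symmDist S S' : ℝ) / (S.card : ℝ)) := by ring
    rw [e] at hk
    linarith
end

section
/- Let G be a conditional g-gain where g ≥ 0 satisfies g(S) ≤ f(|S|) for a nondecreasing f and |g(S)−g(S')| ≤ f(max(|S|,|S'|))/max(|S|,|S'|) when △(S,S') ≤ 1. Then for every nonempty finite multiset S and split rule σ with σ(S) = (S₀, S₁): min(|S₀|,|S₁|)/|S| ≥ G(S,σ)/(4·f(|S|)). -/
/-- Conditional `g`-gain of the split rule `σ` on `S`:
`G(S,σ) = g(S) − (|S₀|/|S|)g(S₀) − (|S₁|/|S|)g(S₁)` where `(S₀,S₁) = σ(S)`. -/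
noncomputable def condGain {α : Type*} (g : Multiset α → ℝ) (σ : α → Bool)
    (S : Multiset α) : ℝ :=
  g S - ((S.filter fun x => σ x = false).card : ℝ) / (S.card : ℝ) *
          g (S.filter fun x => σ x = false)
      - ((S.filter fun x => σ x = true).card : ℝ) / (S.card : ℝ) *
          g (S.filter fun x => σ x = true)

lemma chain {α : Type*} [DecidableEq α] (g : Multiset α → ℝ) (f : ℕ → ℝ)
    (hf : Monotone f)
    (hsm : ∀ S S' : Multiset α, S ≠ 0 → S' ≠ 0 → symmDist S S' ≤ 1 →
      |g S - g S'| ≤ f (max S.card S'.card) / ((max S.card S'.card : ℕ) : ℝ))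
    (S : Multiset α) (hfS : 0 ≤ f S.card) :
    ∀ k : ℕ, ∀ T : Multiset α, T ≠ 0 → T ≤ S → S.card = T.card + k →
      |g S - g T| ≤ k * (f S.card / (T.card + 1 : ℝ)) := by
  intro k
  induction k with
  | zero =>
    intro T hT hTS hcard
    have : T = S := Multiset.eq_of_le_of_card_le hTS (by omega)
    simp [this]
  | succ k ih =>
    intro T hT hTS hcard
    have hne : S - T ≠ 0 := by
      rw [← Multiset.card_pos, Multiset.card_sub hTS]; omega
    obtain ⟨a, ha⟩ := Multiset.exists_mem_of_ne_zero hne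
    have hcnt : T.count a < S.count a := by
      have := Multiset.count_pos.2 ha
      rw [Multiset.count_sub] at this; omega
    have hT'le : a ::ₘ T ≤ S := by
      rw [Multiset.le_iff_count]
      intro x
      rw [Multiset.count_cons]
      by_cases hx : x = a
      · subst hx; simpa using hcnt
      · simpa [hx] using Multiset.le_iff_count.1 hTS x
    have hT'card : (a ::ₘ T).card = T.card + 1 := Multiset.card_cons a T
    have hsd : symmDist (a ::ₘ T) T = 1 := by
      have h1 : (a ::ₘ T) - T = {a} := by
        rw [← Multiset.singleton_add]
        exact add_tsub_cancel_right _ _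
      have h2 : T - (a ::ₘ T) = 0 :=
        tsub_eq_zero_of_le (Multiset.le_cons_self T a)
      simp [symmDist, h1, h2]
    have hstep := hsm (a ::ₘ T) T (Multiset.cons_ne_zero) hT (le_of_eq hsd)
    have hmax : max (a ::ₘ T).card T.card = T.card + 1 := by
      rw [hT'card]; omega
    rw [hmax] at hstep
    have hiH := ih (a ::ₘ T) Multiset.cons_ne_zero hT'le (by rw [hT'card]; omega)
    rw [hT'card] at hiH
    have htri : |g S - g T| ≤ |g S - g (a ::ₘ T)| + |g (a ::ₘ T) - g T| :=
      abs_sub_le _ _ _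
    have hfle : f (T.card + 1) ≤ f S.card := hf (by omega)
    have hp1 : (0:ℝ) < (T.card : ℝ) + 1 := by positivity
    have hp2 : (0:ℝ) < (T.card : ℝ) + 1 + 1 := by positivity
    have h1 : f (T.card + 1) / ((T.card + 1 : ℕ) : ℝ) ≤ f S.card / ((T.card : ℝ) + 1) := by
      push_cast
      gcongr
    have h2 : f S.card / ((T.card : ℝ) + 1 + 1) ≤ f S.card / ((T.card : ℝ) + 1) :=
      div_le_div_of_nonneg_left hfS hp1 (by linarith)
    have hk : (0:ℝ) ≤ (k : ℝ) := Nat.cast_nonneg k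
    have h3 : (k:ℝ) * (f S.card / ((T.card : ℝ) + 1 + 1)) ≤
        (k:ℝ) * (f S.card / ((T.card : ℝ) + 1)) :=
      mul_le_mul_of_nonneg_left h2 hk
    push_cast at hiH h1 hstep ⊢
    rw [add_one_mul]
    linarith [hstep, htri]

lemma helper {α : Type*} [DecidableEq α] (g : Multiset α → ℝ) (f : ℕ → ℝ)
    (hf : Monotone f)
    (hg0 : ∀ S : Multiset α, S ≠ 0 → 0 ≤ g S)
    (hgb : ∀ S : Multiset α, S ≠ 0 → g S ≤ f S.card)
    (hsm : ∀ S S' : Multiset α, S ≠ 0 → S' ≠ 0 → symmDist S S' ≤ 1 →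
      |g S - g S'| ≤ f (max S.card S'.card) / ((max S.card S'.card : ℕ) : ℝ))
    (S A B : Multiset α) (hA : A ≠ 0) (hB : B ≠ 0) (hAB : A + B = S)
    (hle : A.card ≤ B.card) :
    g S - (A.card : ℝ) / (S.card : ℝ) * g A - (B.card : ℝ) / (S.card : ℝ) * g B ≤
      (A.card : ℝ) / (S.card : ℝ) * (4 * f S.card) := by
  have hS : S ≠ 0 := by
    intro h
    rw [h] at hAB
    have := congrArg Multiset.card hAB
    rw [Multiset.card_add, Multiset.card_zero] at this
    have hm := Multiset.card_pos.2 hA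
    omega
  have hcard : A.card + B.card = S.card := by rw [← Multiset.card_add, hAB]
  have hm : 1 ≤ A.card := Multiset.card_pos.2 hA
  have hBS : B ≤ S := hAB ▸ Multiset.le_add_left B A
  have hfS : 0 ≤ f S.card := le_trans (hg0 S hS) (hgb S hS)
  have hchain := chain g f hf hsm S hfS A.card B hB hBS (by omega)
  have hgB : g B ≤ f S.card := le_trans (hgb B hB) (hf (by omega))
  have hgB0 : 0 ≤ g B := hg0 B hB
  have hgA0 : 0 ≤ g A := hg0 A hA
  have hnpos : (0:ℝ) < (S.card : ℝ) := by
    have : 0 < S.card := Multiset.card_pos.2 hS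
    exact_mod_cast this
  have hApos : (0:ℝ) ≤ (A.card : ℝ) := Nat.cast_nonneg _
  -- key: f S.card / (B.card + 1) ≤ 2 * f S.card / S.card
  have hkey : f S.card / ((B.card : ℝ) + 1) ≤ 2 * f S.card / (S.card : ℝ) := by
    rw [div_le_div_iff₀ (by positivity) hnpos]
    have h2 : (S.card : ℝ) ≤ 2 * ((B.card : ℝ) + 1) := by
      have : S.card ≤ 2 * (B.card + 1) := by omega
      exact_mod_cast this
    nlinarith
  have h1 : |g S - g B| ≤ (A.card : ℝ) * (2 * f S.card / (S.card : ℝ)) :=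
    hchain.trans (mul_le_mul_of_nonneg_left hkey hApos)
  have hdropA : 0 ≤ (A.card : ℝ) / (S.card : ℝ) * g A := by positivity
  have hgSB : g S - g B ≤ |g S - g B| := le_abs_self _
  -- g S - (B/n) g B = (g S - g B) + (A/n) g B
  have hsplit : (B.card : ℝ) / (S.card : ℝ) = 1 - (A.card : ℝ) / (S.card : ℝ) := by
    field_simp
    have : (B.card : ℝ) = (S.card : ℝ) - (A.card : ℝ) := by
      have := hcard; push_cast [← this]; ring
    linarith
  have hAgB : (A.card : ℝ) / (S.card : ℝ) * g B ≤ (A.card : ℝ) / (S.card : ℝ) * f S.card := by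
    apply mul_le_mul_of_nonneg_left hgB (by positivity)
  have hmul : (A.card : ℝ) * (2 * f S.card / (S.card : ℝ)) =
      (A.card : ℝ) / (S.card : ℝ) * (2 * f S.card) := by ring
  rw [hsplit]
  nlinarith [h1, hgSB, hdropA, hAgB, mul_nonneg (div_nonneg hApos hnpos.le) hfS]

/-- Balancedness from the gain: `min(|S₀|,|S₁|)/|S| ≥ G(S,σ)/(4 f(|S|))`. -/
theorem stmt10 {α : Type*} [DecidableEq α] (g : Multiset α → ℝ) (f : ℕ → ℝ)
    (hf : Monotone f)
    (hg0 : ∀ S : Multiset α, S ≠ 0 → 0 ≤ g S)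
    (hgb : ∀ S : Multiset α, S ≠ 0 → g S ≤ f S.card)
    (hsm : ∀ S S' : Multiset α, S ≠ 0 → S' ≠ 0 → symmDist S S' ≤ 1 →
      |g S - g S'| ≤ f (max S.card S'.card) / ((max S.card S'.card : ℕ) : ℝ))
    (σ : α → Bool) (S : Multiset α) (hS : S ≠ 0) :
    condGain g σ S / (4 * f S.card) ≤
      ((min (S.filter fun x => σ x = false).card
            (S.filter fun x => σ x = true).card : ℕ) : ℝ) / (S.card : ℝ) := by
  classical
  set A := S.filter (fun x => σ x = false) with hAdef
  set B := S.filter (fun x => σ x = true) with hBdef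
  have hAB : A + B = S := by
    rw [hAdef, hBdef]
    have h := Multiset.filter_add_not (fun x => σ x = false) S
    have h2 : S.filter (fun x => ¬ σ x = false) = S.filter (fun x => σ x = true) :=
      Multiset.filter_congr (fun x _ => by simp)
    rw [h2] at h
    exact h
  have hn : 0 < S.card := Multiset.card_pos.2 hS
  have hnR : (0:ℝ) < (S.card : ℝ) := by exact_mod_cast hn
  have hfS : 0 ≤ f S.card := le_trans (hg0 S hS) (hgb S hS)
  have hG : condGain g σ S =
      g S - (A.card : ℝ) / (S.card : ℝ) * g A - (B.card : ℝ) / (S.card : ℝ) * g B := rfl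
  rcases hfS.eq_or_lt with h0 | hpos
  · simp [← h0]
    positivity
  by_cases hA0 : A = 0
  · have hBS : B = S := by rw [← hAB, hA0, zero_add]
    have hG0 : condGain g σ S = 0 := by
      rw [hG, hA0, hBS]
      simp
      rw [div_self (ne_of_gt hnR), one_mul]
      ring
    rw [hG0, zero_div]
    positivity
  by_cases hB0 : B = 0
  · have hAS : A = S := by rw [← hAB, hB0, add_zero]
    have hG0 : condGain g σ S = 0 := by
      rw [hG, hB0, hAS]
      simp
      rw [div_self (ne_of_gt hnR), one_mul]
      ring
    rw [hG0, zero_div]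
    positivity
  rw [div_le_iff₀ (by positivity : (0:ℝ) < 4 * f S.card)]
  rcases le_total A.card B.card with h | h
  · have hH := helper g f hf hg0 hgb hsm S A B hA0 hB0 hAB h
    rw [min_eq_left h, hG]
    calc g S - (A.card : ℝ) / (S.card : ℝ) * g A - (B.card : ℝ) / (S.card : ℝ) * g B
        ≤ (A.card : ℝ) / (S.card : ℝ) * (4 * f S.card) := hH
      _ = (A.card : ℝ) / (S.card : ℝ) * (4 * f S.card) := rfl
  · have hH := helper g f hf hg0 hgb hsm S B A hB0 hA0 (by rw [add_comm]; exact hAB) h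
    rw [min_eq_right h, hG]
    calc g S - (A.card : ℝ) / (S.card : ℝ) * g A - (B.card : ℝ) / (S.card : ℝ) * g B
        = g S - (B.card : ℝ) / (S.card : ℝ) * g B - (A.card : ℝ) / (S.card : ℝ) * g A := by ring
      _ ≤ (B.card : ℝ) / (S.card : ℝ) * (4 * f S.card) := hH
end

section
/- Let Gini(S) = 1 − Σᵢ pᵢ(S)². If a split rule σ splits S into (S₀,S₁) and GiniGain(S,σ) ≥ α, then min(|S₀|,|S₁|) ≥ (α/16)·|S|. -/
theorem sum_card_label' {α : Type*} {k : ℕ} (lab : α → Fin k) (T : Multiset α) :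
    ∑ i : Fin k, (T.filter fun x => lab x = i).card = T.card := by
  induction T using Multiset.induction with
  | empty => simp
  | cons a T ih =>
    simp only [Multiset.filter_cons, Multiset.card_add, Finset.sum_add_distrib, ih,
      Multiset.card_cons, apply_ite Multiset.card, Multiset.card_singleton, Multiset.card_zero]
    rw [Finset.sum_ite_eq Finset.univ (lab a) (fun _ => 1)]
    simp [add_comm]


/-- If a split rule has Gini gain at least `α` on `S`, then both sides of the split
contain at least `(α/16)·|S|` examples. -/
theorem stmt11 {α : Type*} [DecidableEq α] {k : ℕ} (lab : α → Fin k) (σ : α → Bool)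
    (S : Multiset α) (hS : S ≠ 0) (a : ℝ) (hgain : a ≤ giniGain lab σ S) :
    a / 16 * (S.card : ℝ) ≤
      ((min (S.filter fun x => σ x = false).card
            (S.filter fun x => σ x = true).card : ℕ) : ℝ) := by
  have hsplit : (S.filter fun x => σ x = false) + (S.filter fun x => σ x = true) = S := by
    conv_rhs => rw [← Multiset.filter_add_not (fun x => σ x = false) S]
    congr 1
    exact Multiset.filter_congr (fun x _ => by cases σ x <;> simp)
  have hcard : (S.filter fun x => σ x = false).card + (S.filter fun x => σ x = true).card
      = S.card := by rw [← Multiset.card_add, hsplit]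
  have hn : 0 < S.card := Multiset.card_pos.2 hS
  have hnR : (0:ℝ) < (S.card : ℝ) := by exact_mod_cast hn
  rcases Nat.eq_zero_or_pos (S.filter fun x => σ x = false).card with h0 | h0
  · -- left side empty
    have hz : (S.filter fun x => σ x = false) = 0 := Multiset.card_eq_zero.1 h0
    have heq : (S.filter fun x => σ x = true) = S := by
      conv_rhs => rw [← hsplit, hz, zero_add]
    have hg0 : giniGain lab σ S = 0 := by
      unfold giniGain
      rw [hz, heq]
      simp
      rw [div_self (ne_of_gt hnR), one_mul]
      ring
    have ha : a ≤ 0 := hgain.trans (le_of_eq hg0)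
    have : min (S.filter fun x => σ x = false).card (S.filter fun x => σ x = true).card = 0 := by
      omega
    rw [this]
    push_cast
    nlinarith
  rcases Nat.eq_zero_or_pos (S.filter fun x => σ x = true).card with h1 | h1
  · have hz : (S.filter fun x => σ x = true) = 0 := Multiset.card_eq_zero.1 h1
    have heq : (S.filter fun x => σ x = false) = S := by
      conv_rhs => rw [← hsplit, hz, add_zero]
    have hg0 : giniGain lab σ S = 0 := by
      unfold giniGain
      rw [hz, heq]
      simp
      rw [div_self (ne_of_gt hnR), one_mul]
      ring
    have ha : a ≤ 0 := hgain.trans (le_of_eq hg0)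
    have : min (S.filter fun x => σ x = false).card (S.filter fun x => σ x = true).card = 0 := by
      omega
    rw [this]
    push_cast
    nlinarith
  · -- main case
    set S0 := S.filter fun x => σ x = false with hS0def
    set S1 := S.filter fun x => σ x = true with hS1def
    have hn0 : (0:ℝ) < S0.card := by exact_mod_cast h0
    have hn1 : (0:ℝ) < S1.card := by exact_mod_cast h1
    have hnsum : (S.card : ℝ) = (S0.card : ℝ) + S1.card := by exact_mod_cast hcard.symm
    have hfilter : ∀ i : Fin k, ((S.filter fun x => lab x = i).card : ℝ)
        = ((S0.filter fun x => lab x = i).card : ℝ) + ((S1.filter fun x => lab x = i).card : ℝ) := by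
      intro i
      have : (S.filter fun x => lab x = i) = (S0.filter fun x => lab x = i) + (S1.filter fun x => lab x = i) := by
        rw [← Multiset.filter_add, hsplit]
      rw [this, Multiset.card_add]; push_cast; ring
    have hA : (S0.card:ℝ)/S.card + (S1.card:ℝ)/S.card = 1 := by
      rw [← add_div, ← hnsum, div_self (ne_of_gt hnR)]
    -- key identity
    have hkey : giniGain lab σ S = (S0.card * S1.card / (S.card:ℝ)^2) *
        ∑ i : Fin k, (((S0.filter fun x => lab x = i).card : ℝ)/S0.card
          - ((S1.filter fun x => lab x = i).card : ℝ)/S1.card)^2 := by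
      have expand : giniGain lab σ S = ∑ i : Fin k,
          ((S0.card:ℝ)/S.card * (((S0.filter fun x => lab x = i).card:ℝ)/S0.card)^2
          + (S1.card:ℝ)/S.card * (((S1.filter fun x => lab x = i).card:ℝ)/S1.card)^2
          - (((S.filter fun x => lab x = i).card:ℝ)/S.card)^2) := by
        unfold giniGain giniImp
        rw [Finset.sum_sub_distrib, Finset.sum_add_distrib, ← Finset.mul_sum, ← Finset.mul_sum]
        linear_combination (-1:ℝ) * hA
      rw [expand, Finset.mul_sum]
      refine Finset.sum_congr rfl (fun i _ => ?_)
      rw [hfilter i, hnsum]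
      have h0' := ne_of_gt hn0
      have h1' := ne_of_gt hn1
      have hsum' : ((S0.card:ℝ) + S1.card) ≠ 0 := by positivity
      field_simp
      ring
    -- bound the sum
    have hsum0 : ∑ i : Fin k, ((S0.filter fun x => lab x = i).card : ℝ) = S0.card := by
      exact_mod_cast congrArg (Nat.cast : ℕ → ℝ) (sum_card_label' lab S0)
    have hsum1 : ∑ i : Fin k, ((S1.filter fun x => lab x = i).card : ℝ) = S1.card := by
      exact_mod_cast congrArg (Nat.cast : ℕ → ℝ) (sum_card_label' lab S1)
    have hbound : ∑ i : Fin k, (((S0.filter fun x => lab x = i).card : ℝ)/S0.card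
          - ((S1.filter fun x => lab x = i).card : ℝ)/S1.card)^2 ≤ 2 := by
      have step : ∀ i ∈ Finset.univ, (((S0.filter fun x => lab x = i).card : ℝ)/S0.card
          - ((S1.filter fun x => lab x = i).card : ℝ)/S1.card)^2
          ≤ ((S0.filter fun x => lab x = i).card : ℝ)/S0.card
            + ((S1.filter fun x => lab x = i).card : ℝ)/S1.card := by
        intro i _
        set x := ((S0.filter fun x => lab x = i).card : ℝ)/S0.card with hx
        set y := ((S1.filter fun x => lab x = i).card : ℝ)/S1.card with hy
        have hx0 : 0 ≤ x := by positivity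
        have hy0 : 0 ≤ y := by positivity
        have hx1 : x ≤ 1 := by
          rw [hx, div_le_one hn0]
          exact_mod_cast Multiset.card_le_card (Multiset.filter_le _ _)
        have hy1 : y ≤ 1 := by
          rw [hy, div_le_one hn1]
          exact_mod_cast Multiset.card_le_card (Multiset.filter_le _ _)
        nlinarith
      calc _ ≤ ∑ i : Fin k, (((S0.filter fun x => lab x = i).card : ℝ)/S0.card
            + ((S1.filter fun x => lab x = i).card : ℝ)/S1.card) := Finset.sum_le_sum step
        _ = 2 := by
            rw [Finset.sum_add_distrib, ← Finset.sum_div, ← Finset.sum_div, hsum0, hsum1,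
              div_self (ne_of_gt hn0), div_self (ne_of_gt hn1)]
            norm_num
    have hcoef : (0:ℝ) ≤ S0.card * S1.card / (S.card:ℝ)^2 := by positivity
    have hgain2 : a ≤ (S0.card * S1.card / (S.card:ℝ)^2) * 2 := by
      calc a ≤ _ := hgain
        _ = _ := hkey
        _ ≤ _ := mul_le_mul_of_nonneg_left hbound hcoef
    have han2 : a * (S.card:ℝ)^2 ≤ 2 * (S0.card * S1.card) := by
      rw [div_mul_eq_mul_div, mul_comm] at hgain2
      calc a * (S.card:ℝ)^2 ≤ (2 * ((S0.card:ℝ) * S1.card) / (S.card:ℝ)^2) * (S.card:ℝ)^2 := by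
            apply mul_le_mul_of_nonneg_right hgain2 (by positivity)
        _ = 2 * ((S0.card:ℝ) * S1.card) := by field_simp
    rw [Nat.cast_min]
    have hle0 : (S0.card : ℝ) ≤ S.card := by exact_mod_cast Multiset.card_le_card (Multiset.filter_le _ _)
    have hle1 : (S1.card : ℝ) ≤ S.card := by exact_mod_cast Multiset.card_le_card (Multiset.filter_le _ _)
    rcases le_total (S0.card:ℝ) (S1.card:ℝ) with h | h
    · rw [min_eq_left (by exact_mod_cast h)]
      nlinarith [mul_pos hn0 hnR, mul_le_mul_of_nonneg_left hle1 (le_of_lt hn0)]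
    · rw [min_eq_right (by exact_mod_cast h)]
      nlinarith [mul_pos hn1 hnR, mul_le_mul_of_nonneg_left hle0 (le_of_lt hn1)]
end

section
/- Let X and X' be random variables on a common probability space, each taking at most n ≥ 2 distinct values, with total variation distance δ = d_TV(X, X'). Then |H(X) − H(X')| ≤ δ·log₂(n−1) + H(δ), where H is Shannon entropy in bits and H(δ) is binary entropy. -/
open Real Finset

private lemma nml_subadd {x y : ℝ} (hx : 0 ≤ x) (hy : 0 ≤ y) :
    Real.negMulLog (x + y) ≤ Real.negMulLog x + Real.negMulLog y := by
  rcases eq_or_lt_of_le hx with h | h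
  · simp [← h]
  rcases eq_or_lt_of_le hy with h' | h'
  · simp [← h']
  have hxy : 0 < x + y := by linarith
  have h1 : Real.log x ≤ Real.log (x + y) := Real.log_le_log h (by linarith)
  have h2 : Real.log y ≤ Real.log (x + y) := Real.log_le_log h' (by linarith)
  simp only [Real.negMulLog, neg_mul]
  nlinarith [mul_le_mul_of_nonneg_left h1 hx, mul_le_mul_of_nonneg_left h2 hy]

private lemma nml_sum_le {ι : Type*} (s : Finset ι) (v : ι → ℝ) (hv : ∀ i ∈ s, 0 ≤ v i) :
    Real.negMulLog (∑ i ∈ s, v i) ≤ ∑ i ∈ s, Real.negMulLog (v i) := by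
  induction s using Finset.cons_induction with
  | empty => simp
  | cons a s ha ih =>
    rw [Finset.sum_cons, Finset.sum_cons]
    have h1 : Real.negMulLog (v a + ∑ i ∈ s, v i) ≤
        Real.negMulLog (v a) + Real.negMulLog (∑ i ∈ s, v i) :=
      nml_subadd (hv a (Finset.mem_cons_self a s))
        (Finset.sum_nonneg fun i hi => hv i (Finset.mem_cons_of_mem hi))
    have h2 := ih (fun i hi => hv i (Finset.mem_cons_of_mem hi))
    linarith

private lemma gibbs2 {x y d : ℝ} (hx : 0 ≤ x) (hy : 0 ≤ y) (hd0 : 0 < d) (hd1 : d < 1) :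
    Real.negMulLog x + x * Real.log (1 - d) + Real.negMulLog y + y * Real.log d ≤
      Real.negMulLog (x + y) := by
  have hld : Real.log d ≤ 0 := Real.log_nonpos hd0.le hd1.le
  have hl1d : Real.log (1 - d) ≤ 0 := Real.log_nonpos (by linarith) (by linarith)
  rcases eq_or_lt_of_le hx with h | h
  · simp only [← h, Real.negMulLog_zero, zero_mul, zero_add]
    nlinarith [mul_nonpos_of_nonneg_of_nonpos hy hld]
  rcases eq_or_lt_of_le hy with h' | h'
  · simp only [← h', Real.negMulLog_zero, zero_mul, add_zero]
    nlinarith [mul_nonpos_of_nonneg_of_nonpos hx hl1d]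
  have hxy : 0 < x + y := by linarith
  have h1d : 0 < 1 - d := by linarith
  -- first bound
  have t1 : Real.log ((1 - d) * (x + y)) - Real.log x ≤ (1 - d) * (x + y) / x - 1 := by
    have := Real.log_le_sub_one_of_pos (show 0 < (1 - d) * (x + y) / x by positivity)
    rwa [Real.log_div (by positivity) h.ne'] at this
  have t1' : x * Real.log ((1 - d) * (x + y)) - x * Real.log x ≤ (1 - d) * (x + y) - x := by
    have := mul_le_mul_of_nonneg_left t1 h.le
    have he : x * ((1 - d) * (x + y) / x - 1) = (1 - d) * (x + y) - x := by
      field_simp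
    nlinarith [this]
  have t2 : Real.log (d * (x + y)) - Real.log y ≤ d * (x + y) / y - 1 := by
    have := Real.log_le_sub_one_of_pos (show 0 < d * (x + y) / y by positivity)
    rwa [Real.log_div (by positivity) h'.ne'] at this
  have t2' : y * Real.log (d * (x + y)) - y * Real.log y ≤ d * (x + y) - y := by
    have := mul_le_mul_of_nonneg_left t2 h'.le
    have he : y * (d * (x + y) / y - 1) = d * (x + y) - y := by
      field_simp
    nlinarith [this]
  rw [Real.log_mul h1d.ne' hxy.ne'] at t1'
  rw [Real.log_mul hd0.ne' hxy.ne'] at t2'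
  simp only [Real.negMulLog, neg_mul]
  nlinarith [t1', t2']

private lemma nml_sum_le_card {n : ℕ} (hn : 2 ≤ n) (w : Fin n → ℝ) (hw : ∀ i, 0 ≤ w i)
    (j : Fin n) (hj : w j = 0) {c : ℝ} (hc : ∑ i, w i = c) (hc0 : 0 < c) :
    ∑ i, Real.negMulLog (w i) ≤ Real.negMulLog c + c * Real.log ((n : ℝ) - 1) := by
  set k : ℝ := (n : ℝ) - 1 with hk
  have hk1 : (1 : ℝ) ≤ k := by
    have : (2 : ℝ) ≤ (n : ℝ) := by exact_mod_cast hn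
    simp [hk]; linarith
  have hk0 : (0 : ℝ) < k := by linarith
  set P : Finset (Fin n) := Finset.univ.filter (fun i => w i ≠ 0) with hP
  have hjP : j ∉ P := by simp [hP, hj]
  have hcard : (P.card : ℝ) ≤ k := by
    have h1 : P ⊆ Finset.univ.erase j := by
      intro i hi
      refine Finset.mem_erase.mpr ⟨?_, Finset.mem_univ i⟩
      rintro rfl
      exact hjP hi
    have h2 : P.card ≤ n - 1 := by
      have := Finset.card_le_card h1
      simpa [Finset.card_erase_of_mem (Finset.mem_univ j)] using this
    have h3 : ((n - 1 : ℕ) : ℝ) = k := by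
      rw [Nat.cast_sub (show 1 ≤ n by omega)]; simp [hk]
    calc (P.card : ℝ) ≤ ((n - 1 : ℕ) : ℝ) := by exact_mod_cast h2
      _ = k := h3
  have hsumP : ∑ i ∈ P, w i = c := by
    rw [← hc]
    exact Finset.sum_subset (Finset.filter_subset _ _)
      (fun i _ hi => by simpa [hP] using hi)
  have hsumNML : ∑ i, Real.negMulLog (w i) = ∑ i ∈ P, Real.negMulLog (w i) := by
    refine (Finset.sum_subset (Finset.filter_subset _ _) (fun i _ hi => ?_)).symm
    have : w i = 0 := by simpa [hP] using hi
    simp [this]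
  have keyP : ∀ i ∈ P, Real.negMulLog (w i) ≤
      c / k - w i + w i * Real.log k - w i * Real.log c := by
    intro i hi
    have hne : w i ≠ 0 := by simpa [hP] using hi
    have hwi : 0 < w i := lt_of_le_of_ne (hw i) (Ne.symm hne)
    have t : Real.log c - (Real.log k + Real.log (w i)) ≤ c / (k * w i) - 1 := by
      have := Real.log_le_sub_one_of_pos (show 0 < c / (k * w i) by positivity)
      rwa [Real.log_div hc0.ne' (by positivity), Real.log_mul hk0.ne' hwi.ne'] at this
    have t' := mul_le_mul_of_nonneg_left t hwi.le
    have he : w i * (c / (k * w i) - 1) = c / k - w i := by field_simp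
    rw [he] at t'
    simp only [Real.negMulLog, neg_mul]
    nlinarith [t']
  have hsum := Finset.sum_le_sum keyP
  have hexp : ∑ i ∈ P, (c / k - w i + w i * Real.log k - w i * Real.log c)
      = P.card * (c / k) - c + c * Real.log k - c * Real.log c := by
    simp only [Finset.sum_sub_distrib, Finset.sum_add_distrib, ← Finset.sum_mul, hsumP,
      Finset.sum_const, nsmul_eq_mul]
  rw [hexp] at hsum
  have hck : (P.card : ℝ) * (c / k) ≤ k * (c / k) :=
    mul_le_mul_of_nonneg_right hcard (by positivity)
  have hkk : k * (c / k) = c := by field_simp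
  rw [hkk] at hck
  rw [hsumNML]
  simp only [Real.negMulLog, neg_mul] at hsum ⊢
  linarith [hsum, hck]

private lemma key_ineq (n : ℕ) (hn : 2 ≤ n) (p q : Fin n → ℝ)
    (hp0 : ∀ x, 0 ≤ p x) (hp1 : ∑ x, p x = 1)
    (hq0 : ∀ x, 0 ≤ q x) (hq1 : ∑ x, q x = 1)
    (δ : ℝ) (hδ : δ = (∑ x, |p x - q x|) / 2) :
    (∑ x, Real.negMulLog (p x)) - ∑ x, Real.negMulLog (q x) ≤
      δ * Real.log ((n : ℝ) - 1) + (Real.negMulLog δ + Real.negMulLog (1 - δ)) := by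
  set m : Fin n → ℝ := fun i => min (p i) (q i) with hm
  set u : Fin n → ℝ := fun i => p i - m i with hu
  set v : Fin n → ℝ := fun i => q i - m i with hv
  have hm0 : ∀ i, 0 ≤ m i := fun i => le_min (hp0 i) (hq0 i)
  have hu0 : ∀ i, 0 ≤ u i := fun i => by simp [hu, hm, min_le_left]
  have hv0 : ∀ i, 0 ≤ v i := fun i => by simp [hv, hm, min_le_right]
  have huv : ∀ i, u i + v i = |p i - q i| := by
    intro i
    rcases le_total (p i) (q i) with h | h
    · rw [abs_of_nonpos (by linarith)]
      simp only [hu, hv, hm, min_eq_left h]; ring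
    · rw [abs_of_nonneg (by linarith)]
      simp only [hu, hv, hm, min_eq_right h]; ring
  have hsumuv : ∑ i, u i + ∑ i, v i = 2 * δ := by
    rw [← Finset.sum_add_distrib]
    simp only [huv]
    rw [hδ]; ring
  have hsumuv' : ∑ i, u i - ∑ i, v i = 0 := by
    rw [← Finset.sum_sub_distrib]
    have : ∀ i, u i - v i = p i - q i := fun i => by simp only [hu, hv]; ring
    simp only [this, Finset.sum_sub_distrib, hp1, hq1, sub_self]
  have hsumu : ∑ i, u i = δ := by linarith
  have hsumv : ∑ i, v i = δ := by linarith
  have hδ0 : 0 ≤ δ := by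
    rw [hδ]
    positivity
  rcases eq_or_lt_of_le hδ0 with hd0 | hd0
  · -- δ = 0 : p = q
    have hpq : ∀ i, p i = q i := by
      intro i
      have hz : ∑ x, |p x - q x| = 0 := by
        have := hδ; rw [← hd0] at this
        linarith
      have := (Finset.sum_eq_zero_iff_of_nonneg
        (fun i _ => abs_nonneg (p i - q i))).mp hz i (Finset.mem_univ i)
      have := abs_eq_zero.mp this
      linarith
    simp only [hpq, ← hd0]
    simp
  -- δ > 0 : find j with v j > 0, hence u j = 0
  have hex : ∃ j, 0 < v j := by
    by_contra hcon
    push_neg at hcon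
    have : ∑ i, v i ≤ 0 := Finset.sum_nonpos fun i _ => hcon i
    linarith
  obtain ⟨j, hj⟩ := hex
  have huj : u j = 0 := by
    rcases le_total (p j) (q j) with h | h
    · simp [hu, hm, min_eq_left h]
    · exfalso
      have : v j = 0 := by simp [hv, hm, min_eq_right h]
      linarith
  have hCu : ∑ i, Real.negMulLog (u i) ≤
      Real.negMulLog δ + δ * Real.log ((n : ℝ) - 1) :=
    nml_sum_le_card hn u hu0 j huj hsumu hd0
  have hδ1 : δ ≤ 1 := by
    have hb : ∀ i, |p i - q i| ≤ p i + q i := by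
      intro i
      rw [abs_le]
      constructor <;> nlinarith [hp0 i, hq0 i]
    have : ∑ x, |p x - q x| ≤ ∑ x, (p x + q x) := Finset.sum_le_sum fun i _ => hb i
    rw [Finset.sum_add_distrib, hp1, hq1] at this
    linarith
  rcases eq_or_lt_of_le hδ1 with hd1 | hd1
  · -- δ = 1 : m = 0, p = u, q = v
    have hsm : ∑ i, m i = 0 := by
      have : ∀ i, m i = p i - u i := fun i => by simp [hu]
      simp only [this, Finset.sum_sub_distrib, hp1, hsumu, ← hd1]
      ring
    have hmz : ∀ i, m i = 0 := by
      intro i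
      exact (Finset.sum_eq_zero_iff_of_nonneg (fun i _ => hm0 i)).mp hsm i (Finset.mem_univ i)
    have hpu : ∀ i, p i = u i := fun i => by simp [hu, hmz i]
    have hqv : ∀ i, q i = v i := fun i => by simp [hv, hmz i]
    have h1 : ∑ x, Real.negMulLog (p x) ≤
        Real.negMulLog δ + δ * Real.log ((n : ℝ) - 1) := by
      simp only [hpu]; exact hCu
    have h2 : 0 ≤ ∑ x, Real.negMulLog (q x) := by
      have := nml_sum_le Finset.univ q (fun i _ => hq0 i)
      rw [hq1] at this
      simpa using this
    have h3 : Real.negMulLog δ = 0 := by rw [hd1]; simp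
    have h4 : Real.negMulLog (1 - δ) = 0 := by rw [hd1]; simp
    rw [h3, h4]
    linarith
  -- 0 < δ < 1 : main case
  have hsm : ∑ i, m i = 1 - δ := by
    have : ∀ i, m i = p i - u i := fun i => by simp [hu]
    simp only [this, Finset.sum_sub_distrib, hp1, hsumu]
  -- upper bound on H(p)
  have hA : ∑ x, Real.negMulLog (p x) ≤
      ∑ x, Real.negMulLog (m x) + ∑ x, Real.negMulLog (u x) := by
    rw [← Finset.sum_add_distrib]
    refine Finset.sum_le_sum fun i _ => ?_
    have : p i = m i + u i := by simp [hu]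
    rw [this]
    exact nml_subadd (hm0 i) (hu0 i)
  -- lower bound on H(q)
  have hB : ∑ x, Real.negMulLog (m x) + (1 - δ) * Real.log (1 - δ)
      + ∑ x, Real.negMulLog (v x) + δ * Real.log δ ≤ ∑ x, Real.negMulLog (q x) := by
    have hterm : ∀ i ∈ Finset.univ,
        Real.negMulLog (m i) + m i * Real.log (1 - δ)
          + Real.negMulLog (v i) + v i * Real.log δ ≤ Real.negMulLog (q i) := by
      intro i _
      have : q i = m i + v i := by simp [hv]
      rw [this]
      exact gibbs2 (hm0 i) (hv0 i) hd0 hd1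
    have hsum := Finset.sum_le_sum hterm
    have hexp : ∑ i, (Real.negMulLog (m i) + m i * Real.log (1 - δ)
          + Real.negMulLog (v i) + v i * Real.log δ)
        = ∑ x, Real.negMulLog (m x) + (1 - δ) * Real.log (1 - δ)
          + ∑ x, Real.negMulLog (v x) + δ * Real.log δ := by
      simp only [Finset.sum_add_distrib, ← Finset.sum_mul, hsm, hsumv]
    rw [hexp] at hsum
    exact hsum
  -- lower bound on sum negMulLog v
  have hD : Real.negMulLog δ ≤ ∑ x, Real.negMulLog (v x) := by
    have := nml_sum_le Finset.univ v (fun i _ => hv0 i)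
    rwa [hsumv] at this
  have e1 : Real.negMulLog δ = -(δ * Real.log δ) := by
    simp [Real.negMulLog_eq_neg]
  have e2 : Real.negMulLog (1 - δ) = -((1 - δ) * Real.log (1 - δ)) := by
    simp [Real.negMulLog_eq_neg]
  linarith

/-- Fannes–Audenaert inequality for classical probability distributions on at most
`n` points: `|H(p) − H(q)| ≤ δ·log₂(n−1) + H(δ)` where `δ` is the total variation
distance and `H` is the Shannon entropy in bits (`H(δ)` is the binary entropy). -/
theorem stmt16 (n : ℕ) (hn : 2 ≤ n) (p q : Fin n → ℝ)
    (hp0 : ∀ x, 0 ≤ p x) (hp1 : ∑ x, p x = 1)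
    (hq0 : ∀ x, 0 ≤ q x) (hq1 : ∑ x, q x = 1)
    (δ : ℝ) (hδ : δ = (∑ x, |p x - q x|) / 2) :
    |(∑ x, p x * Real.logb 2 (1 / p x)) - ∑ x, q x * Real.logb 2 (1 / q x)| ≤
      δ * Real.logb 2 ((n : ℝ) - 1) +
        (δ * Real.logb 2 (1 / δ) + (1 - δ) * Real.logb 2 (1 / (1 - δ))) := by
  have hL : (0 : ℝ) < Real.log 2 := Real.log_pos one_lt_two
  have e1 : ∀ t : ℝ, t * Real.logb 2 (1 / t) = Real.negMulLog t / Real.log 2 := by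
    intro t
    rw [Real.logb, one_div, Real.log_inv, Real.negMulLog]
    ring
  have e2 : ∀ t : ℝ, t * Real.logb 2 ((n : ℝ) - 1) = t * Real.log ((n : ℝ) - 1) / Real.log 2 := by
    intro t
    rw [Real.logb]
    ring
  simp only [e1, e2, ← Finset.sum_div]
  rw [div_sub_div_same, ← add_div, ← add_div, abs_div, abs_of_pos hL,
    div_le_div_iff_of_pos_right hL]
  rw [abs_sub_le_iff]
  constructor
  · have := key_ineq n hn p q hp0 hp1 hq0 hq1 δ hδ
    linarith
  · have hδ' : δ = (∑ x, |q x - p x|) / 2 := by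
      simp only [abs_sub_comm]
      exact hδ
    have := key_ineq n hn q p hq0 hq1 hp0 hp1 δ hδ'
    linarith
end

section
/- Let σ be a split rule and G a conditional g-gain with g ≥ 0 bounded by a nondecreasing f (g(S) ≤ f(|S|)) and one-edit smooth (|g(S)−g(S')| ≤ f(n)/n for △(S,S') ≤ 1, n = max(|S|,|S'|)). If S' = S + s with σ assigning s to side 1 (so S₀' = S₀ and S₁' = S₁ + s), then |G(S,σ) − G(S',σ)| ≤ 4·f(n)/n where n = |S'|. -/
set_option maxHeartbeats 1000000 in
/-- Unit-insertion smoothness of the conditional gain: if `g` is nonnegative, bounded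
by a nondecreasing `f`, and one-edit smooth, and `S' = S + s` with `σ` assigning `s`
to side `1`, then `|G(S,σ) − G(S',σ)| ≤ 4 f(n)/n` with `n = |S'|`. -/
theorem stmt19 {α : Type*} [DecidableEq α] (g : Multiset α → ℝ) (f : ℕ → ℝ)
    (hf : Monotone f)
    (hg0 : ∀ S : Multiset α, S ≠ 0 → 0 ≤ g S)
    (hgb : ∀ S : Multiset α, S ≠ 0 → g S ≤ f S.card)
    (hsm : ∀ S S' : Multiset α, S ≠ 0 → S' ≠ 0 → symmDist S S' ≤ 1 →
      |g S - g S'| ≤ f (max S.card S'.card) / ((max S.card S'.card : ℕ) : ℝ))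
    (σ : α → Bool) (S : Multiset α) (hS : S ≠ 0) (s : α) (hside : σ s = true)
    (n : ℕ) (hn : n = S.card + 1) :
    |condGain g σ S - condGain g σ (s ::ₘ S)| ≤ 4 * f n / (n : ℝ) := by
  classical
  have hfc0 : ((s ::ₘ S).filter fun x => σ x = false) = S.filter fun x => σ x = false := by
    rw [Multiset.filter_cons, if_neg (by simp [hside]), zero_add]
  have hfc1 : ((s ::ₘ S).filter fun x => σ x = true)
      = s ::ₘ (S.filter fun x => σ x = true) := by
    rw [Multiset.filter_cons, if_pos (by simp [hside]), Multiset.singleton_add]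
  have hcards : (S.filter fun x => σ x = false).card + (S.filter fun x => σ x = true).card
      = S.card := by
    rw [← Multiset.card_add, Multiset.filter_add_filter,
      Multiset.filter_eq_self.2 (fun a _ => by cases h : σ a <;> simp),
      Multiset.filter_eq_nil.2 (fun a _ h => by simp [h.1] at h)]
    simp
  have hm1 : 1 ≤ S.card := Multiset.card_pos.2 hS
  have hM1 : (1:ℝ) ≤ (S.card : ℝ) := by exact_mod_cast hm1
  have hMpos : (0:ℝ) < (S.card : ℝ) := lt_of_lt_of_le one_pos hM1
  have hN : (n : ℝ) = (S.card : ℝ) + 1 := by rw [hn]; push_cast; ring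
  have hNpos : (0:ℝ) < (n : ℝ) := by rw [hN]; linarith
  have hFn : 0 ≤ f n :=
    le_trans (hg0 S hS) ((hgb S hS).trans (hf (by omega)))
  -- smoothness for inserting s
  have hsm' : ∀ T : Multiset α, T ≠ 0 → T.card + 1 ≤ n →
      |g T - g (s ::ₘ T)| ≤ f n / ((T.card : ℝ) + 1) := by
    intro T hT hTn
    have h1 : T - (s ::ₘ T) = 0 := tsub_eq_zero_of_le (Multiset.le_cons_self T s)
    have h2 : (s ::ₘ T) - T = {s} := by
      rw [← Multiset.singleton_add, add_tsub_cancel_right]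
    have hd : symmDist T (s ::ₘ T) ≤ 1 := by simp [symmDist, h1, h2]
    have h := hsm T (s ::ₘ T) hT (Multiset.cons_ne_zero) hd
    rw [Multiset.card_cons, max_eq_right (Nat.le_succ _)] at h
    refine h.trans ?_
    have hpos : (0:ℝ) < (T.card : ℝ) + 1 := by positivity
    push_cast
    gcongr
    exact hf hTn
  -- notation
  set F0 := S.filter fun x => σ x = false with hF0
  set F1 := S.filter fun x => σ x = true with hF1
  have hEq : condGain g σ S - condGain g σ (s ::ₘ S) =
      (g S - g (s ::ₘ S))
      + ((F0.card : ℝ)/(n:ℝ) * g F0 - (F0.card : ℝ)/(S.card:ℝ) * g F0)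
      + (((F1.card : ℝ)+1)/(n:ℝ) * g (s ::ₘ F1) - (F1.card : ℝ)/(S.card:ℝ) * g F1) := by
    simp only [condGain, hfc0, hfc1, Multiset.card_cons, hn, ← hF0, ← hF1]
    push_cast
    ring
  -- bound A
  have hA : |g S - g (s ::ₘ S)| ≤ f n / (n:ℝ) := by
    have := hsm' S hS (by omega)
    rwa [← hN] at this
  -- bound B
  have hB : |(F0.card : ℝ)/(n:ℝ) * g F0 - (F0.card : ℝ)/(S.card:ℝ) * g F0|
      ≤ f n / (n:ℝ) := by
    rcases eq_or_ne F0 0 with h0 | h0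
    · simp [h0]
      exact div_nonneg hFn hNpos.le
    · have hg0' := hg0 F0 h0
      have hgb' : g F0 ≤ f n :=
        (hgb F0 h0).trans (hf (by omega))
      have haM : (F0.card : ℝ) ≤ (S.card : ℝ) := by
        exact_mod_cast Nat.le.intro hcards
      have hle : (F0.card : ℝ)/(n:ℝ) * g F0 - (F0.card : ℝ)/(S.card:ℝ) * g F0 ≤ 0 := by
        have : (F0.card : ℝ)/(n:ℝ) ≤ (F0.card : ℝ)/(S.card:ℝ) := by
          apply div_le_div_of_nonneg_left (Nat.cast_nonneg _) hMpos
          · linarith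
        nlinarith
      rw [abs_of_nonpos hle, neg_sub]
      rw [div_mul_eq_mul_div, div_mul_eq_mul_div,
        div_sub_div _ _ hMpos.ne' hNpos.ne', div_le_div_iff₀ (by positivity) hNpos, hN]
      have hkey : (F0.card : ℝ) * g F0 ≤ (S.card : ℝ) * f n :=
        mul_le_mul haM hgb' hg0' hMpos.le
      nlinarith [mul_le_mul_of_nonneg_right hkey (by linarith : (0:ℝ) ≤ (S.card:ℝ) + 1)]
  -- bound C
  have hC : |((F1.card : ℝ)+1)/(n:ℝ) * g (s ::ₘ F1) - (F1.card : ℝ)/(S.card:ℝ) * g F1|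
      ≤ 2 * f n / (n:ℝ) := by
    rcases eq_or_ne F1 0 with h1 | h1
    · have hs1 : (s ::ₘ (0:Multiset α)) = ({s} : Multiset α) := rfl
      simp only [h1, Multiset.card_zero, Nat.cast_zero, zero_add, zero_div, zero_mul, sub_zero,
        hs1]
      have hgs : 0 ≤ g {s} := hg0 _ (by simp)
      have hgs' : g {s} ≤ f n := (hgb _ (by simp)).trans (hf (by simp; omega))
      rw [abs_of_nonneg (by positivity), one_div, inv_mul_eq_div]
      rw [div_le_div_iff₀ hNpos hNpos]
      nlinarith
    · have hb1 : 1 ≤ F1.card := Multiset.card_pos.2 h1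
      have hbF1 : F1.card ≤ S.card := by omega
      have hbM : (F1.card : ℝ) ≤ (S.card : ℝ) := by exact_mod_cast hbF1
      have hbpos : (0:ℝ) < (F1.card : ℝ) + 1 := by positivity
      have hg1 := hg0 F1 h1
      have hg1b : g F1 ≤ f n :=
        (hgb F1 h1).trans (hf (by omega))
      have hsm1 := hsm' F1 h1 (by omega)
      have hdec : ((F1.card : ℝ)+1)/(n:ℝ) * g (s ::ₘ F1) - (F1.card : ℝ)/(S.card:ℝ) * g F1
          = ((F1.card : ℝ)+1)/(n:ℝ) * (g (s ::ₘ F1) - g F1)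
            + g F1 * (((F1.card : ℝ)+1)/(n:ℝ) - (F1.card : ℝ)/(S.card:ℝ)) := by ring
      have t1 : |((F1.card : ℝ)+1)/(n:ℝ) * (g (s ::ₘ F1) - g F1)| ≤ f n / (n:ℝ) := by
        rw [abs_mul, abs_of_nonneg (by positivity), abs_sub_comm]
        calc ((F1.card : ℝ)+1)/(n:ℝ) * |g F1 - g (s ::ₘ F1)|
            ≤ ((F1.card : ℝ)+1)/(n:ℝ) * (f n / ((F1.card : ℝ) + 1)) := by
              exact mul_le_mul_of_nonneg_left hsm1 (by positivity)
          _ = f n / (n:ℝ) := by field_simp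
      have t2 : |g F1 * (((F1.card : ℝ)+1)/(n:ℝ) - (F1.card : ℝ)/(S.card:ℝ))|
          ≤ f n / (n:ℝ) := by
        have hd0 : 0 ≤ ((F1.card : ℝ)+1)/(n:ℝ) - (F1.card : ℝ)/(S.card:ℝ) := by
          rw [sub_nonneg, div_le_div_iff₀ hMpos hNpos]
          nlinarith
        rw [abs_of_nonneg (mul_nonneg hg1 hd0)]
        have heq2 : ((F1.card : ℝ)+1)/(n:ℝ) - (F1.card : ℝ)/(S.card:ℝ)
            = ((S.card : ℝ) - (F1.card : ℝ)) / ((S.card : ℝ) * (n:ℝ)) := by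
          rw [hN]; field_simp; ring
        rw [heq2, ← mul_div_assoc, div_le_div_iff₀ (by positivity) hNpos]
        calc g F1 * ((S.card:ℝ) - (F1.card:ℝ)) * (n:ℝ)
            ≤ f n * (S.card:ℝ) * (n:ℝ) := by
              refine mul_le_mul_of_nonneg_right ?_ hNpos.le
              exact mul_le_mul hg1b (by linarith) (by linarith) hFn
          _ = f n * ((S.card:ℝ) * (n:ℝ)) := by ring
      rw [hdec, show 2 * f n / (n:ℝ) = f n/(n:ℝ) + f n/(n:ℝ) by ring]
      exact le_trans (abs_add_le _ _) (add_le_add t1 t2)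
  rw [hEq, show 4 * f n / (n:ℝ) = f n/(n:ℝ) + f n/(n:ℝ) + 2 * f n/(n:ℝ) by ring]
  refine le_trans (abs_add_le _ _) ?_
  refine le_trans (add_le_add (abs_add_le _ _) le_rfl) ?_
  exact add_le_add (add_le_add hA hB) hC
end
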